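/- arXiv:0902.4107 — 9 statements merged into one kernel-verified Lean document; each statement's English description precedes it below -/
import Mathlib

section
/- Let V be a Hilbert C*-module over a C*-algebra A. A subset Q ⊆ V is bounded with respect to the topology τ_{V̂} (generated by the seminorms μ_z(x) = ‖⟨z,x⟩‖, z ∈ V) if and only if Q is bounded in norm. -/
open Filter Topology Pointwise

/-- The December 2024 Mathlib `CStarModule` (right module via `SMul Aᵐᵒᵖ E`), kept with its
old meaning since Mathlib's `CStarModule` now describes left modules (`SMul A E`). -/
class CStarModuleOld (A E : Type*) [NonUnitalSemiring A] [StarRing A] [Module ℂ A]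
    [AddCommGroup E] [Module ℂ E] [PartialOrder A] [SMul Aᵐᵒᵖ E] [Norm A] [Norm E]
    extends Inner A E where
  inner_add_right {x} {y} {z} : inner x (y + z) = inner x y + inner x z
  inner_self_nonneg {x} : 0 ≤ inner x x
  inner_self {x} : inner x x = 0 ↔ x = 0
  inner_op_smul_right {a : A} {x y : E} : inner x (MulOpposite.op a • y) = inner x y * a
  inner_smul_right_complex {z : ℂ} {x} {y} : inner x (z • y) = z • inner x y
  star_inner x y : star (inner x y) = inner y x
  norm_eq_sqrt_norm_inner_self x : ‖x‖ = √‖inner x x‖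

variable (A E : Type*) [NonUnitalCStarAlgebra A] [PartialOrder A] [StarOrderedRing A]
  [NormedAddCommGroup E] [NormedSpace ℂ E] [SMul Aᵐᵒᵖ E] [CStarModuleOld A E]

/-- The weak module topology `τ_V̂` on a Hilbert C*-module `E`, generated by the seminorms
`x ↦ ‖⟪z, x⟫‖` for `z ∈ E`; equivalently, the initial topology of the family of linear maps
`x ↦ ⟪z, x⟫` into `A`. -/
noncomputable def tauHat : TopologicalSpace E :=
  ⨅ z : E, TopologicalSpace.induced (fun x : E => (inner A z x : A)) inferInstance

namespace CStarModuleOld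

variable {A E}

lemma inner_add_left' {x y z : E} : inner A (x + y) z = inner A x z + inner A y z := by
  rw [← star_star (inner A (x + y) z), star_inner, inner_add_right, star_add, star_inner,
    star_inner]

lemma inner_op_smul_left' {a : A} {x y : E} :
    inner A (MulOpposite.op a • x) y = star a * inner A x y := by
  rw [← star_inner, inner_op_smul_right, star_mul, star_inner]

lemma inner_smul_left_complex' {z : ℂ} {x y : E} : inner A (z • x) y = star z • inner A x y := by
  rw [← star_inner, inner_smul_right_complex, star_smul, star_inner]

lemma inner_smul_right_real' {r : ℝ} {x y : E} : inner A x (r • y) = r • inner A x y := by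
  rw [← Complex.coe_smul, inner_smul_right_complex, Complex.coe_smul]

lemma inner_smul_left_real' {r : ℝ} {x y : E} : inner A (r • x) y = r • inner A x y := by
  rw [← Complex.coe_smul, inner_smul_left_complex', Complex.star_def, Complex.conj_ofReal,
    Complex.coe_smul]

/-- The sesquilinear inner product. -/
noncomputable def innerSLinOld : E →ₗ⋆[ℂ] E →ₗ[ℂ] A where
  toFun x := { toFun := fun y => inner A x y
               map_add' := fun _ _ => inner_add_right
               map_smul' := fun _ _ => inner_smul_right_complex }
  map_add' _ _ := by ext; exact inner_add_left'
  map_smul' _ _ := by ext; exact inner_smul_left_complex'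

lemma inner_sub_right' {x y z : E} : inner A x (y - z) = inner A x y - inner A x z :=
  (innerSLinOld (A := A) x).map_sub y z

lemma inner_sub_left' {x y z : E} : inner A (x - y) z = inner A x z - inner A y z := by
  have := congrArg (fun f => f z) ((innerSLinOld (A := A) (E := E)).map_sub x y)
  exact this

@[simp]
lemma inner_zero_right' {x : E} : inner A x (0 : E) = 0 := (innerSLinOld (A := A) x).map_zero

lemma norm_sq_eq {x : E} : ‖x‖ ^ 2 = ‖inner A x x‖ := by
  rw [norm_eq_sqrt_norm_inner_self (A := A), Real.sq_sqrt (norm_nonneg _)]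

lemma inner_mul_inner_swap_le' {x y : E} :
    inner A y x * inner A x y ≤ ‖x‖ ^ 2 • inner A y y := by
  rcases eq_or_ne x 0 with h | h
  · subst h
    have h0 : inner A (0 : E) y = 0 := by
      have := (innerSLinOld (A := A) (E := E)).map_zero
      exact congrArg (fun f => f y) this
    have h0' : inner A y (0 : E) = 0 := (innerSLinOld (A := A) y).map_zero
    simp [h0, h0']
  · have hxpos : 0 < ‖x‖ := norm_pos_iff.mpr h
    have h₁ : ∀ (a : A),
        (0 : A) ≤ ‖x‖ ^ 2 • (star a * a) - ‖x‖ ^ 2 • (star a * inner A x y)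
                  - ‖x‖ ^ 2 • (inner A y x * a) + ‖x‖ ^ 2 • (‖x‖ ^ 2 • inner A y y) := fun a => by
      calc (0 : A) ≤ inner A (MulOpposite.op a • x - ‖x‖ ^ 2 • y)
                      (MulOpposite.op a • x - ‖x‖ ^ 2 • y) := by exact inner_self_nonneg
            _ = star a * inner A x x * a - ‖x‖ ^ 2 • (star a * inner A x y)
                  - ‖x‖ ^ 2 • (inner A y x * a) + ‖x‖ ^ 2 • (‖x‖ ^ 2 • inner A y y) := by
                      simp only [inner_sub_right', inner_op_smul_right, inner_sub_left',
                        inner_op_smul_left', inner_smul_left_real', mul_sub, mul_smul_comm,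
                        inner_smul_right_real', smul_sub, sub_mul, add_mul, mul_assoc, smul_mul_assoc]
                      abel
            _ ≤ ‖x‖ ^ 2 • (star a * a) - ‖x‖ ^ 2 • (star a * inner A x y)
                  - ‖x‖ ^ 2 • (inner A y x * a) + ‖x‖ ^ 2 • (‖x‖ ^ 2 • inner A y y) := by
                      gcongr
                      calc _ ≤ ‖inner A x x‖ • (star a * a) :=
                          CStarAlgebra.star_left_conjugate_le_norm_smul (hb := star_inner x x)
                        _ = ‖x‖ ^ 2 • (star a * a) := by rw [norm_sq_eq (A := A)]
    specialize h₁ (inner A x y)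
    simp only [star_inner, sub_self, zero_sub, le_neg_add_iff_add_le, add_zero] at h₁
    rwa [smul_le_smul_iff_of_pos_left (pow_pos hxpos _)] at h₁

lemma norm_inner_le' {x y : E} : ‖inner A x y‖ ≤ ‖x‖ * ‖y‖ := by
  have := calc ‖inner A x y‖ ^ 2 = ‖inner A y x * inner A x y‖ := by
                rw [← star_inner x, CStarRing.norm_star_mul_self, pow_two]
    _ ≤ ‖‖x‖ ^ 2 • inner A y y‖ := by
                refine CStarAlgebra.norm_le_norm_of_nonneg_of_le ?_ inner_mul_inner_swap_le'
                rw [← star_inner x]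
                exact star_mul_self_nonneg (inner A x y)
    _ = ‖x‖ ^ 2 * ‖inner A y y‖ := by simp [norm_smul]
    _ = ‖x‖ ^ 2 * ‖y‖ ^ 2 := by rw [norm_sq_eq (A := A) (x := y)]
    _ = (‖x‖ * ‖y‖) ^ 2 := by simp only [mul_pow]
  refine (pow_le_pow_iff_left₀ (norm_nonneg (inner A x y)) ?_ (by simp)).mp this
  positivity

/-- The inner product as a continuous sesquilinear map. -/
noncomputable def innerSLOld : E →L⋆[ℂ] E →L[ℂ] A :=
  LinearMap.mkContinuous₂ (innerSLinOld : E →ₗ⋆[ℂ] E →ₗ[ℂ] A) 1 <| fun x y => by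
    rw [one_mul]; exact norm_inner_le'

end CStarModuleOld

variable {A E}

lemma tauHat_le_norm_topology : (inferInstance : TopologicalSpace E) ≤ tauHat A E := by
  refine le_iInf fun z => ?_
  rw [← continuous_iff_le_induced]
  exact (CStarModuleOld.innerSLOld (A := A) z).continuous

/-- A subset `Q` of a Hilbert C*-module `E` is von Neumann bounded for the weak module
topology `τ_V̂` if and only if it is bounded in norm. -/
theorem tauHat_bounded_iff_norm_bounded [CompleteSpace E] (Q : Set E) :
    (∀ U : Set E, U ∈ @nhds E (tauHat A E) 0 →
      ∃ s : ℝ, 0 < s ∧ ∀ t : ℝ, s < t → Q ⊆ (t • U : Set E)) ↔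
    ∃ C : ℝ, ∀ x ∈ Q, ‖x‖ ≤ C := by
  constructor
  · intro h
    -- the family of continuous (conjugate-)linear maps `z ↦ ⟪z, x⟫` for `x ∈ Q`
    set g : Q → E →SL[starRingEnd ℂ] A :=
      fun x => (CStarModuleOld.innerSLOld (A := A) (E := E)).flip (x : E) with hg
    have hgapp : ∀ (x : Q) (z : E), g x z = (inner A z (x : E) : A) := fun x z => rfl
    -- pointwise boundedness from τ-boundedness
    have hpt : ∀ z : E, ∃ C : ℝ, ∀ x : Q, ‖g x z‖ ≤ C := by
      intro z
      set U : Set E := (fun x : E => (inner A z x : A)) ⁻¹' Metric.ball 0 1 with hU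
      have hopen : IsOpen[tauHat A E] U := by
        have hle : tauHat A E ≤
            TopologicalSpace.induced (fun x : E => (inner A z x : A)) inferInstance :=
          iInf_le _ z
        exact hle _ ⟨Metric.ball 0 1, Metric.isOpen_ball, rfl⟩
      have hmem : U ∈ @nhds E (tauHat A E) 0 :=
by
        letI : TopologicalSpace E := tauHat A E
        exact hopen.mem_nhds (by simp [hU])
      obtain ⟨s, hs, hsub⟩ := h U hmem
      refine ⟨s + 1, fun x => ?_⟩
      have hx : (x : E) ∈ (s + 1) • U := hsub (s + 1) (by linarith) x.2
      obtain ⟨u, hu, hux⟩ := hx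
      rw [hgapp]
      have hs1 : (0:ℝ) < s + 1 := by linarith
      have : (inner A z (x : E) : A) = (s + 1) • (inner A z u : A) := by
        rw [← hux, CStarModuleOld.inner_smul_right_real']
      rw [this, norm_smul]
      have hu1 : ‖(inner A z u : A)‖ < 1 := by
        simpa [hU] using hu
      calc |s + 1| * ‖(inner A z u : A)‖ ≤ (s + 1) * 1 := by
            rw [abs_of_pos hs1]
            exact mul_le_mul_of_nonneg_left hu1.le hs1.le
        _ = s + 1 := mul_one _
    obtain ⟨C', hC'⟩ := banach_steinhaus hpt
    refine ⟨max C' 0, fun x hx => ?_⟩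
    rcases eq_or_ne x 0 with rfl | hx0
    · simp
    · have hxpos : (0:ℝ) < ‖x‖ := norm_pos_iff.mpr hx0
      have h1 : ‖x‖ ^ 2 = ‖g ⟨x, hx⟩ x‖ := by
        rw [hgapp, CStarModuleOld.norm_sq_eq (A := A)]
      have h2 : ‖g ⟨x, hx⟩ x‖ ≤ C' * ‖x‖ :=
        ((g ⟨x, hx⟩).le_opNorm x).trans
          (mul_le_mul_of_nonneg_right (hC' ⟨x, hx⟩) (norm_nonneg _))
      have : ‖x‖ * ‖x‖ ≤ C' * ‖x‖ := by
        rw [← sq]; rw [h1]; exact h2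
      have hle : ‖x‖ ≤ C' := le_of_mul_le_mul_right (by linarith [this]) hxpos
      exact hle.trans (le_max_left _ _)
  · rintro ⟨C, hC⟩ U hU
    have hU' : U ∈ nhds (0 : E) := nhds_mono tauHat_le_norm_topology hU
    obtain ⟨ε, hε, hball⟩ := Metric.mem_nhds_iff.mp hU'
    refine ⟨(max C 0 + 1) / ε, by positivity, fun t ht x hx => ?_⟩
    have htpos : (0:ℝ) < t :=
      lt_of_le_of_lt (by positivity) ht
    refine ⟨t⁻¹ • x, ?_, ?_⟩
    · apply hball
      simp only [Metric.mem_ball, dist_zero_right, norm_smul, norm_inv, Real.norm_eq_abs,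
        abs_of_pos htpos]
      have hxC : ‖x‖ ≤ max C 0 := (hC x hx).trans (le_max_left _ _)
      have : (max C 0 + 1) / ε < t := ht
      have h2 : max C 0 + 1 < t * ε := (div_lt_iff₀ hε).mp this
      have h3 : ‖x‖ < t * ε := by
        have : max C 0 + 1 ≤ t * ε := h2.le
        linarith [hxC]
      calc t⁻¹ * ‖x‖ < t⁻¹ * (t * ε) := by
            exact mul_lt_mul_of_pos_left h3 (by positivity)
        _ = ε := by field_simp
    · show t • t⁻¹ • x = x
      rw [smul_smul, mul_inv_cancel₀ htpos.ne', one_smul]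
end

section
/- Let A be a unital C*-algebra and V = ℓ²(A) the standard Hilbert A-module. If the topologies τ_{V̂} and τ_{V'} coincide on V, then V is self-dual (equivalently, A is finite-dimensional). -/
set_option linter.unusedSectionVars false
set_option linter.unusedVariables false
set_option maxHeartbeats 1000000

open Filter Topology

variable (A : Type*) [CStarAlgebra A]

/-- The standard Hilbert module `ℓ²(A)` over a C*-algebra `A`: sequences `(a i)` in `A`
such that `∑ (a i)* (a i)` converges in norm. -/
def StdMod : Type _ := {a : ℕ → A // Summable fun i => star (a i) * a i}

/-- The `A`-valued inner product on `ℓ²(A)`: `⟪x, y⟫ = ∑' i, (x i)* (y i)`. -/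
noncomputable def stdInner (x y : StdMod A) : A := ∑' i, star (x.1 i) * y.1 i

/-- The weak module topology `τ_V̂` on `ℓ²(A)`, generated by the seminorms
`x ↦ ‖⟪z, x⟫‖` for `z ∈ ℓ²(A)`. -/
noncomputable def tauHatStd : TopologicalSpace (StdMod A) :=
  ⨅ z : StdMod A, TopologicalSpace.induced (fun x : StdMod A => stdInner A z x) inferInstance

/-- For unital `A`, the dual module `ℓ²(A)'` is identified with the set of sequences `(b i)`
in `A` whose partial sums of `∑ (b i)* (b i)` are uniformly bounded. -/
def StdDual : Type _ :=
  {b : ℕ → A // ∃ C : ℝ, ∀ n : ℕ, ‖∑ i ∈ Finset.range n, star (b i) * b i‖ ≤ C}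

/-- The weak module topology `τ_V'` on `ℓ²(A)`, generated by the seminorms
`x ↦ ‖f(x)‖` for `f` in the dual module `ℓ²(A)' `. -/
noncomputable def tauDualStd : TopologicalSpace (StdMod A) :=
  ⨅ f : StdDual A, TopologicalSpace.induced
    (fun x : StdMod A => ∑' i, star (f.1 i) * x.1 i) inferInstance

section Aux


variable {A}

open scoped InnerProductSpace in
private lemma cs_fin (n : ℕ) (a b : Fin n → A) :
    ‖∑ i, star (a i) * b i‖ ^ 2 ≤ ‖∑ i, star (a i) * a i‖ * ‖∑ i, star (b i) * b i‖ := by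
  letI := CStarAlgebra.spectralOrder A
  haveI := CStarAlgebra.spectralOrderedRing A
  let x : WithCStarModule A (Π _ : Fin n, A) := (WithCStarModule.equiv _ _).symm (fun i => star (a i))
  let y : WithCStarModule A (Π _ : Fin n, A) := (WithCStarModule.equiv _ _).symm (fun i => star (b i))
  have h := CStarModule.norm_inner_le (A := A) (E := WithCStarModule A (Π _ : Fin n, A))
    (x := y) (y := x)
  rw [mul_comm] at h
  have hx : ⟪y, x⟫_A = ∑ i, star (a i) * b i := by
    rw [WithCStarModule.pi_inner]
    show ∑ i, star (a i) * star (star (b i)) = _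
    simp only [star_star]
  have hnx : ‖x‖ = Real.sqrt ‖∑ i, star (a i) * a i‖ := by
    rw [WithCStarModule.pi_norm]
    show Real.sqrt ‖∑ i, star (a i) * star (star (a i))‖ = _
    simp only [star_star]
  have hny : ‖y‖ = Real.sqrt ‖∑ i, star (b i) * b i‖ := by
    rw [WithCStarModule.pi_norm]
    show Real.sqrt ‖∑ i, star (b i) * star (star (b i))‖ = _
    simp only [star_star]
  rw [hx, hnx, hny] at h
  calc ‖∑ i, star (a i) * b i‖ ^ 2
      ≤ (Real.sqrt ‖∑ i, star (a i) * a i‖ * Real.sqrt ‖∑ i, star (b i) * b i‖) ^ 2 :=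
        pow_le_pow_left₀ (norm_nonneg _) h 2
    _ = ‖∑ i, star (a i) * a i‖ * ‖∑ i, star (b i) * b i‖ := by
        rw [mul_pow, Real.sq_sqrt (norm_nonneg _), Real.sq_sqrt (norm_nonneg _)]

private lemma cs_finset (s : Finset ℕ) (a b : ℕ → A) :
    ‖∑ i ∈ s, star (a i) * b i‖ ^ 2 ≤ ‖∑ i ∈ s, star (a i) * a i‖ * ‖∑ i ∈ s, star (b i) * b i‖ := by
  have key : ∀ g : ℕ → A, ∑ i ∈ s, g i = ∑ j : Fin s.card, g (s.equivFin.symm j).1 := by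
    intro g
    rw [← Finset.sum_coe_sort s g]
    exact (Equiv.sum_comp s.equivFin.symm (fun i : s => g i.1)).symm
  rw [key (fun i => star (a i) * b i), key (fun i => star (a i) * a i),
    key (fun i => star (b i) * b i)]
  exact cs_fin s.card (fun j => a (s.equivFin.symm j).1) (fun j => b (s.equivFin.symm j).1)

private lemma norm_mono {a b : A} : letI := CStarAlgebra.spectralOrder A; 0 ≤ a → a ≤ b → ‖a‖ ≤ ‖b‖ := by
  letI := CStarAlgebra.spectralOrder A
  haveI := CStarAlgebra.spectralOrderedRing A
  intro h1 h2
  exact CStarAlgebra.norm_le_norm_of_nonneg_of_le h1 h2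

private lemma sum_subset_norm_le {s t : Finset ℕ} (hst : s ⊆ t) (f : ℕ → A) :
    ‖∑ i ∈ s, star (f i) * f i‖ ≤ ‖∑ i ∈ t, star (f i) * f i‖ := by
  letI := CStarAlgebra.spectralOrder A
  haveI := CStarAlgebra.spectralOrderedRing A
  refine CStarAlgebra.norm_le_norm_of_nonneg_of_le
    (Finset.sum_nonneg fun i _ => star_mul_self_nonneg _) ?_
  exact Finset.sum_le_sum_of_subset_of_nonneg hst fun i _ _ => star_mul_self_nonneg _

private lemma dual_Ico_bound {f : ℕ → A} {C : ℝ}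
    (hC : ∀ n, ‖∑ i ∈ Finset.range n, star (f i) * f i‖ ≤ C) (m n : ℕ) :
    ‖∑ i ∈ Finset.Ico m n, star (f i) * f i‖ ≤ C := by
  refine le_trans (sum_subset_norm_le ?_ f) (hC n)
  intro i hi
  simp only [Finset.mem_Ico, Finset.mem_range] at hi ⊢
  omega

/-- tail vanishing for summable sequences -/
private lemma tail_small {g : ℕ → A} (hg : Summable g) {η : ℝ} (hη : 0 < η) :
    ∃ m0 : ℕ, ∀ m ≥ m0, ∀ n, ‖∑ i ∈ Finset.Ico m n, g i‖ < η := by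
  obtain ⟨s, hs⟩ := summable_iff_vanishing_norm.mp hg η hη
  obtain ⟨m0, hm0⟩ := s.exists_nat_subset_range
  refine ⟨m0, fun m hm n => ?_⟩
  apply hs
  rw [Finset.disjoint_left]
  intro i hi his
  have := hm0 his
  simp only [Finset.mem_range] at this
  simp only [Finset.mem_Ico] at hi
  omega

private lemma key_summable (h : tauHatStd A = tauDualStd A) (f : StdDual A) :
    Summable fun i => star (f.1 i) * f.1 i := by
  classical
  obtain ⟨C, hC⟩ := f.2
  have hC0 : 0 ≤ C := le_trans (norm_nonneg _) (hC 0)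
  set φ : StdMod A → A := fun x => ∑' i, star (f.1 i) * x.1 i with hφdef
  have hcont : Continuous[tauDualStd A, inferInstance] φ :=
    continuous_iInf_dom (i := f) continuous_induced_dom
  rw [← h] at hcont
  -- truncations
  have xtsum : ∀ m n : ℕ, Summable fun i =>
      star ((fun j => if j ∈ Finset.Ico m n then f.1 j else 0) i) *
        ((fun j => if j ∈ Finset.Ico m n then f.1 j else 0) i) := by
    intro m n
    apply summable_of_ne_finset_zero (s := Finset.Ico m n)
    intro i hi
    show star (if i ∈ Finset.Ico m n then f.1 i else 0) *
      (if i ∈ Finset.Ico m n then f.1 i else 0) = 0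
    rw [if_neg hi]
    simp
  set xt : ℕ → ℕ → StdMod A := fun m n =>
    ⟨fun j => if j ∈ Finset.Ico m n then f.1 j else 0, xtsum m n⟩ with hxt
  have inner_xt : ∀ (z : StdMod A) (m n : ℕ),
      stdInner A z (xt m n) = ∑ i ∈ Finset.Ico m n, star (z.1 i) * f.1 i := by
    intro z m n
    rw [stdInner]
    rw [tsum_eq_sum (s := Finset.Ico m n)
      (by intro i hi; show star (z.1 i) * (if i ∈ Finset.Ico m n then f.1 i else 0) = 0
          rw [if_neg hi, mul_zero])]
    exact Finset.sum_congr rfl fun i hi => by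
      show star (z.1 i) * (if i ∈ Finset.Ico m n then f.1 i else 0) = _
      rw [if_pos hi]
  have phi_xt : ∀ m n : ℕ, φ (xt m n) = ∑ i ∈ Finset.Ico m n, star (f.1 i) * f.1 i := by
    intro m n
    show ∑' i, star (f.1 i) * (xt m n).1 i = _
    rw [tsum_eq_sum (s := Finset.Ico m n)
      (by intro i hi; show star (f.1 i) * (if i ∈ Finset.Ico m n then f.1 i else 0) = 0
          rw [if_neg hi, mul_zero])]
    exact Finset.sum_congr rfl fun i hi => by
      show star (f.1 i) * (if i ∈ Finset.Ico m n then f.1 i else 0) = _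
      rw [if_pos hi]
  -- main epsilon statement
  have main : ∀ ε : ℝ, 0 < ε → ∃ m : ℕ, ∀ n,
      ‖∑ i ∈ Finset.Ico m n, star (f.1 i) * f.1 i‖ < ε := by
    intro ε hε
    let x0 : StdMod A := ⟨fun _ => 0, by simpa using summable_zero⟩
    have hφ0 : φ x0 = 0 := by simp [hφdef, x0]
    have hInner0 : ∀ z : StdMod A, stdInner A z x0 = 0 := by
      intro z; simp [stdInner, x0]
    have hU : φ ⁻¹' Metric.ball 0 ε ∈
        ⨅ z : StdMod A, Filter.comap (fun x : StdMod A => stdInner A z x) (𝓝 0) := by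
      have ht : φ ⁻¹' Metric.ball 0 ε ∈ @nhds _ (tauHatStd A) x0 := by
        have ht' := @Continuous.tendsto _ _ (tauHatStd A) _ _ hcont x0
        rw [hφ0] at ht'
        exact ht' (Metric.ball_mem_nhds 0 hε)
      rw [tauHatStd, _root_.nhds_iInf] at ht
      simp only [nhds_induced, hInner0] at ht
      exact ht
    rw [Filter.mem_iInf] at hU
    obtain ⟨I, hIfin, V, hV, hUeq⟩ := hU
    -- get δ for each z
    have hz : ∀ z : I, ∃ δ : ℝ, 0 < δ ∧
        ∀ x : StdMod A, ‖stdInner A z.1 x‖ < δ → x ∈ V z := by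
      intro z
      obtain ⟨W, hW, hWsub⟩ := Filter.mem_comap.mp (hV z)
      obtain ⟨δ, hδ, hball⟩ := Metric.mem_nhds_iff.mp hW
      refine ⟨δ, hδ, fun x hx => hWsub ?_⟩
      apply hball
      simpa [dist_eq_norm] using hx
    choose δ hδpos hδmem using hz
    -- for each z, choose threshold
    have hthr : ∀ z : I, ∃ m0 : ℕ, ∀ m ≥ m0, ∀ n, xt m n ∈ V z := by
      intro z
      have hη : 0 < δ z ^ 2 / (C + 1) :=
        div_pos (pow_pos (hδpos z) 2) (by linarith)
      obtain ⟨m0, hm0⟩ := tail_small z.1.2 hη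
      refine ⟨m0, fun m hm n => ?_⟩
      apply hδmem z
      rw [inner_xt]
      have hcs := cs_finset (Finset.Ico m n) z.1.1 f.1
      have h1 : ‖∑ i ∈ Finset.Ico m n, star (z.1.1 i) * z.1.1 i‖ < δ z ^ 2 / (C + 1) :=
        hm0 m hm n
      have h2 : ‖∑ i ∈ Finset.Ico m n, star (f.1 i) * f.1 i‖ ≤ C := dual_Ico_bound hC m n
      have hlt : ‖∑ i ∈ Finset.Ico m n, star (z.1.1 i) * f.1 i‖ ^ 2 < δ z ^ 2 := by
        calc ‖∑ i ∈ Finset.Ico m n, star (z.1.1 i) * f.1 i‖ ^ 2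
            ≤ ‖∑ i ∈ Finset.Ico m n, star (z.1.1 i) * z.1.1 i‖ *
              ‖∑ i ∈ Finset.Ico m n, star (f.1 i) * f.1 i‖ := hcs
          _ ≤ ‖∑ i ∈ Finset.Ico m n, star (z.1.1 i) * z.1.1 i‖ * C := by
              apply mul_le_mul_of_nonneg_left h2 (norm_nonneg _)
          _ < (δ z ^ 2 / (C + 1)) * (C + 1) := by
              rcases eq_or_lt_of_le hC0 with hc | hc
              · have : C = 0 := hc.symm
                simp only [this]
                rw [mul_zero, zero_add, mul_one, div_one]
                exact pow_pos (hδpos z) 2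
              · calc ‖∑ i ∈ Finset.Ico m n, star (z.1.1 i) * z.1.1 i‖ * C
                    < (δ z ^ 2 / (C + 1)) * C := by
                      apply mul_lt_mul_of_pos_right h1 hc
                  _ ≤ (δ z ^ 2 / (C + 1)) * (C + 1) := by
                      apply mul_le_mul_of_nonneg_left (by linarith) hη.le
          _ = δ z ^ 2 := by field_simp
      exact lt_of_pow_lt_pow_left₀ 2 (hδpos z).le hlt
    choose m0 hm0 using hthr
    haveI := hIfin.fintype
    let M : ℕ := Finset.univ.sup m0
    refine ⟨M, fun n => ?_⟩
    have hmem : xt M n ∈ φ ⁻¹' Metric.ball 0 ε := by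
      rw [hUeq]
      apply Set.mem_iInter.mpr
      intro z
      exact hm0 z M (Finset.le_sup (Finset.mem_univ z)) n
    have := hmem
    simp only [Set.mem_preimage, Metric.mem_ball, dist_zero_right] at this
    rwa [phi_xt] at this
  -- conclude summability
  rw [summable_iff_vanishing_norm]
  intro ε hε
  obtain ⟨m, hm⟩ := main ε hε
  refine ⟨Finset.range m, fun t ht => ?_⟩
  rcases t.eq_empty_or_nonempty with rfl | hne
  · simpa using hε
  · have hsub : t ⊆ Finset.Ico m ((t.sup id) + 1) := by
      intro i hi
      simp only [Finset.mem_Ico]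
      constructor
      · by_contra hlt
        push_neg at hlt
        exact (Finset.disjoint_left.mp ht hi) (Finset.mem_range.mpr hlt)
      · exact Nat.lt_succ_of_le (Finset.le_sup (f := id) hi)
    calc ‖∑ i ∈ t, star (f.1 i) * f.1 i‖
        ≤ ‖∑ i ∈ Finset.Ico m ((t.sup id) + 1), star (f.1 i) * f.1 i‖ :=
          sum_subset_norm_le hsub f.1
      _ < ε := hm _

end Aux

section Part2
variable {A : Type*} [CStarAlgebra A] [PartialOrder A] [StarOrderedRing A]


private lemma sum_orth_bound (e : ℕ → A) (h1 : ∀ n, ‖e n‖ ≤ 1) (h2 : ∀ n, 0 ≤ e n)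
    (h3 : ∀ i j, i ≠ j → e i * e j = 0) (n : ℕ) :
    ‖∑ i ∈ Finset.range n, star (e i) * e i‖ ≤ 1 := by
  have hsa : ∀ i, star (e i) = e i := fun i => (IsSelfAdjoint.of_nonneg (h2 i))
  set S := ∑ i ∈ Finset.range n, star (e i) * e i with hS
  have hs_eq : S = ∑ i ∈ Finset.range n, e i * e i := by
    apply Finset.sum_congr rfl; intro i _; rw [hsa]
  have hSnonneg : 0 ≤ S := Finset.sum_nonneg fun i _ => star_mul_self_nonneg _
  have hSsa : star S = S := by
    rw [hS, star_sum]
    apply Finset.sum_congr rfl; intro i _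
    rw [star_mul, star_star, hsa]
  have hSS : S * S = ∑ i ∈ Finset.range n, (e i * e i) * (e i * e i) := by
    rw [hs_eq, Finset.sum_mul_sum]
    apply Finset.sum_congr rfl
    intro i hi
    apply Finset.sum_eq_single_of_mem i hi
    intro j _ hji
    rw [mul_assoc, ← mul_assoc (e i) (e j) (e j), h3 i j (Ne.symm hji), zero_mul, mul_zero]
  -- each (e i * e i)^2 ≤ e i * e i
  have hsq : ∀ i, (e i * e i) * (e i * e i) ≤ e i * e i := by
    intro i
    have hle1 : e i * e i ≤ 1 := by
      have hpos : (0:A) ≤ e i * e i := by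
        have := star_mul_self_nonneg (e i); rwa [hsa i] at this
      refine (CStarAlgebra.norm_le_one_iff_of_nonneg (e i * e i) hpos).mp ?_
      calc ‖e i * e i‖ = ‖star (e i) * e i‖ := by rw [hsa]
        _ = ‖e i‖ * ‖e i‖ := CStarRing.norm_star_mul_self
        _ ≤ 1 * 1 := by apply mul_le_mul (h1 i) (h1 i) (norm_nonneg _) zero_le_one
        _ = 1 := one_mul 1
    have := star_left_conjugate_le_conjugate hle1 (e i)
    rw [hsa i, mul_one] at this
    calc (e i * e i) * (e i * e i) = e i * (e i * e i) * e i := by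
          simp only [mul_assoc]
      _ ≤ e i * e i := this
  have hS2le : S * S ≤ S := by
    rw [hSS, hs_eq]
    exact Finset.sum_le_sum fun i _ => hsq i
  have hnormSS : ‖S * S‖ = ‖S‖ * ‖S‖ := by
    have h' := CStarRing.norm_star_mul_self (x := S); rwa [hSsa] at h'
  have hSSnonneg : 0 ≤ S * S := by
    have := star_mul_self_nonneg S; rwa [hSsa] at this
  have hle : ‖S‖ * ‖S‖ ≤ ‖S‖ := by
    rw [← hnormSS]
    exact CStarAlgebra.norm_le_norm_of_nonneg_of_le hSSnonneg hS2le
  nlinarith [norm_nonneg S]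

private def IsProjE (p : A) : Prop := p * p = p ∧ star p = p

private lemma IsProjE.nonneg {p : A} (hp : IsProjE p) : 0 ≤ p := by
  have : p = star p * p := by rw [hp.2, hp.1]
  rw [this]; exact star_mul_self_nonneg _

private lemma IsProjE.norm_le_one {p : A} (hp : IsProjE p) : ‖p‖ ≤ 1 := by
  have h : ‖p‖ * ‖p‖ = ‖p‖ := by
    conv_rhs => rw [← hp.1]
    conv_lhs => rw [← CStarRing.norm_star_mul_self (x := p), hp.2]
  nlinarith [norm_nonneg p]

private lemma IsProjE.norm_one {p : A} (hp : IsProjE p) (hne : p ≠ 0) : ‖p‖ = 1 := by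
  have h : ‖p‖ * ‖p‖ = ‖p‖ := by
    conv_rhs => rw [← hp.1]
    conv_lhs => rw [← CStarRing.norm_star_mul_self (x := p), hp.2]
  have hne0 : ‖p‖ ≠ 0 := fun h0 => hne (norm_eq_zero.mp h0)
  have h' : ‖p‖ * ‖p‖ = ‖p‖ * 1 := by rw [h, mul_one]
  exact mul_left_cancel₀ hne0 h'

/-- No infinite sequence of nonzero pairwise orthogonal projections, given the key
summability property. -/
private lemma no_orth_proj_seq
    (horth : ∀ e : ℕ → A, (∀ n, ‖e n‖ = 1) → (∀ n, 0 ≤ e n) →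
      (∀ i j, i ≠ j → e i * e j = 0) → False)
    (p : ℕ → A) (hp : ∀ n, IsProjE (p n)) (hne : ∀ n, p n ≠ 0)
    (ho : ∀ i j, i ≠ j → p i * p j = 0) : False :=
  horth p (fun n => (hp n).norm_one (hne n)) (fun n => (hp n).nonneg) ho


section Nontriv
variable [Nontrivial A]


/-- bump construction: an sa element whose ℝ-spectrum contains a strictly increasing sequence
yields an orthogonal sequence of positive norm-one elements. -/
private lemma orth_seq_of_strictMono {a : A} (ha : IsSelfAdjoint a) (t : ℕ → ℝ)
    (ht : StrictMono t) (hmem : ∀ n, t n ∈ spectrum ℝ a) :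
    ∃ e : ℕ → A, (∀ n, ‖e n‖ = 1) ∧ (∀ n, 0 ≤ e n) ∧ (∀ i j, i ≠ j → e i * e j = 0) := by
  -- centers and radii
  set s : ℕ → ℝ := fun n => t (2 * n + 1) with hs
  set r : ℕ → ℝ := fun n => min (t (2 * n + 1) - t (2 * n)) (t (2 * n + 2) - t (2 * n + 1))
    with hr
  have hrpos : ∀ n, 0 < r n := by
    intro n
    apply lt_min <;> · rw [sub_pos]; exact ht (by omega)
  set g : ℕ → ℝ → ℝ := fun n x => max 0 (1 - |x - s n| / r n) with hg
  have hgcont : ∀ n, Continuous (g n) := by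
    intro n
    apply Continuous.max continuous_const
    exact Continuous.sub continuous_const
      (((continuous_id.sub continuous_const).abs).div_const (r n))
  have hgnonneg : ∀ n x, 0 ≤ g n x := fun n x => le_max_left _ _
  have hgle1 : ∀ n x, g n x ≤ 1 := by
    intro n x
    apply max_le zero_le_one
    have : 0 ≤ |x - s n| / r n := div_nonneg (abs_nonneg _) (hrpos n).le
    linarith
  have hgone : ∀ n, g n (s n) = 1 := by
    intro n
    simp [hg, sub_self, abs_zero]
  have hsupp : ∀ n x, g n x ≠ 0 → |x - s n| < r n := by
    intro n x hx
    by_contra hge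
    push_neg at hge
    apply hx
    rw [hg]
    simp only
    rw [max_eq_left]
    rw [sub_nonpos]
    rw [le_div_iff₀ (hrpos n)]
    linarith
  -- separation of centers
  have hsep : ∀ i j, i < j → r i + r j ≤ |s i - s j| := by
    intro i j hij
    have h1 : r i ≤ t (2 * i + 2) - t (2 * i + 1) := min_le_right _ _
    have h2 : r j ≤ t (2 * j + 1) - t (2 * j) := min_le_left _ _
    have h3 : t (2 * i + 2) ≤ t (2 * j) := ht.le_iff_le.mpr (by omega)
    have h4 : s i < s j := ht (by omega)
    rw [abs_sub_comm, abs_of_pos (by linarith [h4] : (0:ℝ) < s j - s i)]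
    simp only [hs]
    linarith
  have hdisj : ∀ i j, i ≠ j → ∀ x, g i x * g j x = 0 := by
    intro i j hij x
    by_contra hprod
    have hi : g i x ≠ 0 := fun h => hprod (by rw [h, zero_mul])
    have hj : g j x ≠ 0 := fun h => hprod (by rw [h, mul_zero])
    have h1 := hsupp i x hi
    have h2 := hsupp j x hj
    have h3 : |s i - s j| < r i + r j := by
      calc |s i - s j| ≤ |x - s i| + |x - s j| := by
            rw [abs_sub_comm x (s i)]
            exact abs_sub_le _ _ _
        _ < r i + r j := add_lt_add h1 h2
    rcases lt_or_gt_of_ne hij with h | h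
    · exact absurd h3 (not_lt.mpr (hsep i j h))
    · rw [abs_sub_comm] at h3
      linarith [hsep j i h]
  refine ⟨fun n => cfc (g n) a, ?_, ?_, ?_⟩
  · intro n
    apply le_antisymm
    · exact norm_cfc_le zero_le_one (fun x _ => by
        rw [Real.norm_eq_abs, abs_of_nonneg (hgnonneg n x)]; exact hgle1 n x)
    · have hspec : (1 : ℝ) ∈ spectrum ℝ (cfc (g n) a) := by
        rw [cfc_map_spectrum (g n) a]
        exact ⟨s n, hmem (2 * n + 1), hgone n⟩
      have := spectrum.norm_le_norm_of_mem hspec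
      simpa using this
  · intro n
    exact cfc_nonneg (fun x _ => hgnonneg n x)
  · intro i j hij
    rw [← cfc_mul (g i) (g j) a (hgcont i).continuousOn (hgcont j).continuousOn]
    have : (fun x => g i x * g j x) = (0 : ℝ → ℝ) := by
      funext x; exact hdisj i j hij x
    rw [this, cfc_zero]

end Nontriv


private def SubP (q p : A) : Prop := p * q = q ∧ q * p = q

private def MinP (p : A) : Prop :=
  IsProjE p ∧ p ≠ 0 ∧ ∀ q, IsProjE q → SubP q p → q = 0 ∨ q = p

private lemma subp_refl {p : A} (hp : IsProjE p) : SubP p p := ⟨hp.1, hp.1⟩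

private lemma subp_trans {r q p : A} (hrq : SubP r q) (hqp : SubP q p) : SubP r p := by
  constructor
  · rw [← hrq.1, ← mul_assoc, hqp.1]
  · rw [← hrq.2, mul_assoc, hqp.2]

private lemma diff_proj {p q : A} (hp : IsProjE p) (hq : IsProjE q) (hqp : SubP q p) :
    IsProjE (p - q) ∧ SubP (p - q) p ∧ (p - q) * q = 0 ∧ q * (p - q) = 0 := by
  have h1 : (p - q) * (p - q) = p - q := by
    rw [sub_mul, mul_sub, mul_sub, hp.1, hq.1, hqp.1, hqp.2]
    abel
  have h2 : star (p - q) = p - q := by rw [star_sub, hp.2, hq.2]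
  have h3 : p * (p - q) = p - q := by rw [mul_sub, hp.1, hqp.1]
  have h4 : (p - q) * p = p - q := by rw [sub_mul, hp.1, hqp.2]
  have h5 : (p - q) * q = 0 := by rw [sub_mul, hqp.1, hq.1, sub_self]
  have h6 : q * (p - q) = 0 := by rw [mul_sub, hqp.2, hq.1, sub_self]
  exact ⟨⟨h1, h2⟩, ⟨h3, h4⟩, h5, h6⟩

/-- every nonzero projection dominates a minimal projection, assuming no infinite orthogonal
sequences of nonzero projections -/
private lemma exists_min
    (hnop : ∀ p : ℕ → A, (∀ n, IsProjE (p n)) → (∀ n, p n ≠ 0) →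
      (∀ i j, i ≠ j → p i * p j = 0) → False)
    (p : A) (hp : IsProjE p) (hne : p ≠ 0) : ∃ r, MinP r ∧ SubP r p := by
  by_contra hcon
  push_neg at hcon
  -- every nonzero subprojection of p has a proper nonzero subprojection
  have step : ∀ q : A, IsProjE q → SubP q p → q ≠ 0 →
      ∃ q', (IsProjE q' ∧ SubP q' p ∧ q' ≠ 0) ∧ SubP q' q ∧ q' ≠ q := by
    intro q hq hqp hqne
    by_contra hstep
    push_neg at hstep
    have hmin : MinP q := by
      refine ⟨hq, hqne, fun q' hq' hq'q => ?_⟩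
      by_contra hboth
      push_neg at hboth
      exact hboth.2 (hstep q' ⟨hq', subp_trans hq'q hqp, hboth.1⟩ hq'q)
    exact hcon q hmin hqp
  -- build a strictly descending chain
  let T := {q : A // IsProjE q ∧ SubP q p ∧ q ≠ 0}
  have stepT : ∀ q : T, ∃ q' : T, SubP q'.1 q.1 ∧ q'.1 ≠ q.1 := by
    rintro ⟨q, hq, hqp, hqne⟩
    obtain ⟨q', h1, h2, h3⟩ := step q hq hqp hqne
    exact ⟨⟨q', h1⟩, h2, h3⟩
  choose f hf1 hf2 using stepT
  let seq : ℕ → T := fun n => f^[n] ⟨p, hp, subp_refl hp, hne⟩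
  have hseq_succ : ∀ n, seq (n + 1) = f (seq n) := by
    intro n
    exact Function.iterate_succ_apply' f n _
  have hchain : ∀ n m, n ≤ m → SubP (seq m).1 (seq n).1 := by
    intro n m hnm
    induction m, hnm using Nat.le_induction with
    | base => exact subp_refl (seq n).2.1
    | succ m hnm ih =>
        rw [hseq_succ m]
        exact subp_trans (hf1 (seq m)) ih
  set d : ℕ → A := fun n => (seq n).1 - (seq (n + 1)).1 with hd
  have hdp : ∀ n, IsProjE (d n) ∧ (d n) ≠ 0 := by
    intro n
    have h := diff_proj (seq n).2.1 (seq (n+1)).2.1 (hchain n (n+1) (by omega))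
    refine ⟨h.1, ?_⟩
    rw [hd]
    simp only
    rw [sub_ne_zero]
    rw [hseq_succ n]
    exact fun hcontra => (hf2 (seq n)) hcontra.symm
  have hdorth : ∀ i j, i < j → d i * d j = 0 := by
    intro i j hij
    have e1 : (seq i).1 * (seq j).1 = (seq j).1 := (hchain i j (by omega)).1
    have e2 : (seq i).1 * (seq (j+1)).1 = (seq (j+1)).1 := (hchain i (j+1) (by omega)).1
    have e3 : (seq (i+1)).1 * (seq j).1 = (seq j).1 := (hchain (i+1) j (by omega)).1
    have e4 : (seq (i+1)).1 * (seq (j+1)).1 = (seq (j+1)).1 := (hchain (i+1) (j+1) (by omega)).1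
    rw [hd]
    simp only
    rw [sub_mul, mul_sub, mul_sub, e1, e2, e3, e4]
    abel
  apply hnop d (fun n => (hdp n).1) (fun n => (hdp n).2)
  intro i j hij
  rcases lt_or_gt_of_ne hij with h | h
  · exact hdorth i j h
  · have h0 := hdorth j i h
    have hsa_i : star (d i) = d i := (hdp i).1.2
    have hsa_j : star (d j) = d j := (hdp j).1.2
    calc d i * d j = star (star (d i * d j)) := (star_star _).symm
      _ = star (star (d j) * star (d i)) := by rw [star_mul]
      _ = star (d j * d i) := by rw [hsa_i, hsa_j]
      _ = 0 := by rw [h0, star_zero]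

/-- sums of finite orthogonal families of projections -/
private lemma sum_proj (F : Finset A) (hF : ∀ p ∈ F, IsProjE p)
    (horth : ∀ p ∈ F, ∀ q ∈ F, p ≠ q → p * q = 0) :
    IsProjE (∑ p ∈ F, p) ∧ ∀ p ∈ F, (∑ q ∈ F, q) * p = p ∧ p * (∑ q ∈ F, q) = p := by
  have absorb : ∀ p ∈ F, (∑ q ∈ F, q) * p = p ∧ p * (∑ q ∈ F, q) = p := by
    intro p hp
    constructor
    · rw [Finset.sum_mul]
      rw [Finset.sum_eq_single_of_mem p hp (fun q hq hqp => horth q hq p hp hqp)]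
      exact (hF p hp).1
    · rw [Finset.mul_sum]
      rw [Finset.sum_eq_single_of_mem p hp (fun q hq hqp => horth p hp q hq (Ne.symm hqp))]
      exact (hF p hp).1
  refine ⟨⟨?_, ?_⟩, absorb⟩
  · rw [Finset.sum_mul]
    apply Finset.sum_congr rfl
    intro p hp
    exact (absorb p hp).2.symm ▸ (absorb p hp).2
  · rw [star_sum]
    apply Finset.sum_congr rfl
    intro p hp
    exact (hF p hp).2


section Nontriv2
variable [Nontrivial A]


/-- a finite resolution of the identity into minimal pairwise-orthogonal projections -/
private lemma exists_resolution
    (hnop : ∀ p : ℕ → A, (∀ n, IsProjE (p n)) → (∀ n, p n ≠ 0) →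
      (∀ i j, i ≠ j → p i * p j = 0) → False) :
    ∃ F : Finset A, (∀ p ∈ F, MinP p) ∧ (∀ p ∈ F, ∀ q ∈ F, p ≠ q → p * q = 0) ∧
      ∑ p ∈ F, p = 1 := by
  classical
  -- Zorn's lemma on orthogonal families of minimal projections
  set S : Set (Set A) := {s | (∀ p ∈ s, MinP p) ∧ s.Pairwise (fun p q => p * q = 0)} with hSdef
  have hzorn : ∃ M, Maximal (· ∈ S) M := by
    apply zorn_subset
    intro c hcS hchain
    refine ⟨⋃₀ c, ⟨?_, ?_⟩, fun s hs => Set.subset_sUnion_of_mem hs⟩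
    · rintro p ⟨s, hs, hps⟩
      exact (hcS hs).1 p hps
    · rintro p ⟨s, hs, hps⟩ q ⟨u, hu, hqu⟩ hpq
      rcases hchain.total hs hu with h | h
      · exact (hcS hu).2 (h hps) hqu hpq
      · exact (hcS hs).2 hps (h hqu) hpq
  obtain ⟨M, hM⟩ := hzorn
  have hMS := hM.prop
  -- M is finite
  have hMfin : M.Finite := by
    by_contra hinf
    have hinf' : M.Infinite := hinf
    let u := hinf'.natEmbedding
    apply hnop (fun n => (u n).1) (fun n => (hMS.1 _ (u n).2).1) (fun n => (hMS.1 _ (u n).2).2.1)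
    intro i j hij
    have hne : (u i).1 ≠ (u j).1 := fun h => hij (u.injective (Subtype.ext h))
    exact hMS.2 (u i).2 (u j).2 hne
  set F : Finset A := hMfin.toFinset with hF
  have hFmem : ∀ p, p ∈ F ↔ p ∈ M := fun p => hMfin.mem_toFinset
  have hFmin : ∀ p ∈ F, MinP p := fun p hp => hMS.1 p ((hFmem p).mp hp)
  have hForth : ∀ p ∈ F, ∀ q ∈ F, p ≠ q → p * q = 0 := fun p hp q hq hpq =>
    hMS.2 ((hFmem p).mp hp) ((hFmem q).mp hq) hpq
  have hFproj : ∀ p ∈ F, IsProjE p := fun p hp => (hFmin p hp).1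
  obtain ⟨hPproj, hPabs⟩ := sum_proj F hFproj hForth
  set P : A := ∑ p ∈ F, p with hP
  by_cases hP1 : P = 1
  · exact ⟨F, hFmin, hForth, hP1⟩
  -- otherwise extend M, contradiction
  exfalso
  have h1P : IsProjE (1 - P) := by
    constructor
    · rw [sub_mul, mul_sub, mul_sub, one_mul, mul_one, one_mul, hPproj.1]
      abel
    · rw [star_sub, star_one, hPproj.2]
  have h1Pne : (1 : A) - P ≠ 0 := fun h => hP1 (by rwa [sub_eq_zero, eq_comm] at h)
  obtain ⟨r, hrmin, hrsub⟩ := exists_min hnop (1 - P) h1P h1Pne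
  have hrP : r * P = 0 := by
    have h' := hrsub.2
    rw [mul_sub, mul_one] at h'
    exact sub_eq_self.mp h'
  have hPr : P * r = 0 := by
    have h' := hrsub.1
    rw [sub_mul, one_mul] at h'
    exact sub_eq_self.mp h'
  have hrF : ∀ p ∈ F, r * p = 0 ∧ p * r = 0 := by
    intro p hp
    constructor
    · rw [← (hPabs p hp).1, ← mul_assoc, hrP, zero_mul]
    · rw [← (hPabs p hp).2, mul_assoc, hPr, mul_zero]
  have hrne : r ∉ M := by
    intro hrM
    have := (hrF r ((hFmem r).mpr hrM)).1
    rw [hrmin.1.1] at this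
    exact hrmin.2.1 this
  have hM' : insert r M ∈ S := by
    constructor
    · intro p hp
      rcases Set.mem_insert_iff.mp hp with h | h
      · rw [h]; exact hrmin
      · exact hMS.1 p h
    · rw [Set.pairwise_insert]
      refine ⟨hMS.2, fun q hq _ => ?_⟩
      have hqF : q ∈ F := (hFmem q).mpr hq
      exact ⟨(hrF q hqF).1, (hrF q hqF).2⟩
  have := hM.2 hM' (Set.subset_insert r M)
  exact hrne (this (Set.mem_insert r M))

end Nontriv2

private noncomputable def chiF (l : ℝ) : ℝ → ℝ := fun t => if t = l then 1 else 0

private lemma chiF_cont {y : A} (hfin : (spectrum ℝ y).Finite) (l : ℝ) :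
    ContinuousOn (chiF l) (spectrum ℝ y) := hfin.continuousOn _

private lemma spec_proj_isProj {y : A} (hy : IsSelfAdjoint y)
    (hfin : (spectrum ℝ y).Finite) (l : ℝ) : IsProjE (cfc (chiF l) y) := by
  constructor
  · rw [← cfc_mul _ _ y (chiF_cont hfin l) (chiF_cont hfin l)]
    congr 1
    funext t
    by_cases h : t = l <;> simp [chiF, h]
  · exact cfc_predicate (chiF l) y

private lemma spec_proj_ne_zero [Nontrivial A] {y : A} (hy : IsSelfAdjoint y)
    (hfin : (spectrum ℝ y).Finite) {l : ℝ} (hl : l ∈ spectrum ℝ y) :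
    cfc (chiF l) y ≠ 0 := by
  intro h0
  have hspec : (1 : ℝ) ∈ spectrum ℝ (cfc (chiF l) y) := by
    rw [cfc_map_spectrum (chiF l) y hy (chiF_cont hfin l)]
    exact ⟨l, hl, by simp [chiF]⟩
  rw [h0, spectrum.zero_eq] at hspec
  exact one_ne_zero (Set.mem_singleton_iff.mp hspec)

private lemma spec_proj_mul_self {y : A} (hy : IsSelfAdjoint y)
    (hfin : (spectrum ℝ y).Finite) (l : ℝ) :
    cfc (chiF l) y * y = l • cfc (chiF l) y ∧ y * cfc (chiF l) y = l • cfc (chiF l) y := by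
  constructor
  · have h1 : cfc (fun t : ℝ => chiF l t * t) y = cfc (chiF l) y * y := by
      rw [cfc_mul (chiF l) (fun t => t) y (chiF_cont hfin l) continuousOn_id, cfc_id' ℝ y hy]
    have h2 : (fun t : ℝ => chiF l t * t) = fun t => l * chiF l t := by
      funext t
      by_cases h : t = l <;> simp [chiF, h]
    rw [← h1, h2, cfc_const_mul l (chiF l) y (chiF_cont hfin l)]
  · have h1 : cfc (fun t : ℝ => t * chiF l t) y = y * cfc (chiF l) y := by
      rw [cfc_mul (fun t => t) (chiF l) y continuousOn_id (chiF_cont hfin l), cfc_id' ℝ y hy]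
    have h2 : (fun t : ℝ => t * chiF l t) = fun t => l * chiF l t := by
      funext t
      by_cases h : t = l <;> simp [chiF, h]
    rw [← h1, h2, cfc_const_mul l (chiF l) y (chiF_cont hfin l)]

private lemma spec_proj_subp {y p : A} (hy : IsSelfAdjoint y)
    (hfin : (spectrum ℝ y).Finite) {l : ℝ} (hl : l ≠ 0)
    (h1 : p * y = y) (h2 : y * p = y) : SubP (cfc (chiF l) y) p := by
  obtain ⟨hqy, hyq⟩ := spec_proj_mul_self hy hfin l
  set q : A := cfc (chiF l) y with hq
  have hq1 : q = l⁻¹ • (q * y) := by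
    rw [hqy, smul_smul, inv_mul_cancel₀ hl, one_smul]
  have hq2 : q = l⁻¹ • (y * q) := by
    rw [hyq, smul_smul, inv_mul_cancel₀ hl, one_smul]
  constructor
  · conv_lhs => rw [hq2]
    rw [mul_smul_comm, ← mul_assoc, h1, ← hq2]
  · conv_lhs => rw [hq1]
    rw [smul_mul_assoc, mul_assoc, h2, ← hq1]

private lemma spec_proj_orth {y : A} (hy : IsSelfAdjoint y)
    (hfin : (spectrum ℝ y).Finite) {l m : ℝ} (hlm : l ≠ m) :
    cfc (chiF l) y * cfc (chiF m) y = 0 := by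
  rw [← cfc_mul _ _ y (chiF_cont hfin l) (chiF_cont hfin m)]
  have h : (fun t : ℝ => chiF l t * chiF m t) = 0 := by
    funext t
    by_cases h1 : t = l
    · have h2 : t ≠ m := fun h => hlm (h1 ▸ h ▸ rfl)
      simp [chiF, h1, h2, hlm]
    · simp [chiF, h1]
  rw [h, cfc_zero]

private lemma sa_zero_of_spectrum_zero {y : A} (hy : IsSelfAdjoint y)
    (hsub : spectrum ℝ y ⊆ {0}) : y = 0 := by
  calc y = cfc (id : ℝ → ℝ) y := (cfc_id ℝ y hy).symm
    _ = cfc (0 : ℝ → ℝ) y := cfc_congr (fun t ht => Set.mem_singleton_iff.mp (hsub ht))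
    _ = 0 := cfc_zero ℝ y

private lemma sa_decomp_of_spectrum_pair {y : A} (hy : IsSelfAdjoint y)
    (hfin : (spectrum ℝ y).Finite) {l : ℝ}
    (hsub : spectrum ℝ y ⊆ {0, l}) : y = l • cfc (chiF l) y := by
  calc y = cfc (id : ℝ → ℝ) y := (cfc_id ℝ y hy).symm
    _ = cfc (fun t => l * chiF l t) y := by
        apply cfc_congr
        intro t ht
        by_cases hl : t = l
        · rw [hl]
          simp [chiF]
        · have ht0 : t = 0 := by
            rcases hsub ht with h | h
            · exact h
            · exact absurd h hl
          have h0l : (0 : ℝ) ≠ l := ht0 ▸ hl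
          rw [ht0]
          simp [chiF, h0l]
    _ = l • cfc (chiF l) y := cfc_const_mul l (chiF l) y (chiF_cont hfin l)

/-- a minimal projection's corner is one-dimensional: selfadjoint case -/
private lemma corner_sa [Nontrivial A] {p : A} (hp : MinP p)
    (hfin : ∀ x : A, IsSelfAdjoint x → (spectrum ℝ x).Finite)
    {y : A} (hy : IsSelfAdjoint y) (h1 : p * y = y) (h2 : y * p = y) :
    ∃ c : ℝ, y = c • p := by
  have hyfin := hfin y hy
  by_cases hsub : spectrum ℝ y ⊆ {0}
  · exact ⟨0, by rw [sa_zero_of_spectrum_zero hy hsub, zero_smul]⟩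
  -- pick a nonzero spectral value
  obtain ⟨l, hlmem, hlne⟩ : ∃ l ∈ spectrum ℝ y, l ≠ 0 := by
    by_contra hcon
    push_neg at hcon
    exact hsub fun t ht => Set.mem_singleton_iff.mpr (hcon t ht)
  -- its spectral projection equals p
  have hqp : ∀ m : ℝ, m ∈ spectrum ℝ y → m ≠ 0 → cfc (chiF m) y = p := by
    intro m hmmem hmne
    have hproj := spec_proj_isProj hy hyfin m
    have hsubp := spec_proj_subp hy hyfin hmne h1 h2
    rcases hp.2.2 _ hproj hsubp with h | h
    · exact absurd h (spec_proj_ne_zero hy hyfin hmmem)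
    · exact h
  -- spectrum ⊆ {0, l}
  have hspec : spectrum ℝ y ⊆ {0, l} := by
    intro m hm
    by_contra hmne
    simp only [Set.mem_insert_iff, Set.mem_singleton_iff, not_or] at hmne
    have hml : m ≠ l := hmne.2
    have h0 : cfc (chiF m) y * cfc (chiF l) y = 0 := spec_proj_orth hy hyfin hml
    rw [hqp m hm hmne.1, hqp l hlmem hlne, hp.1.1] at h0
    exact hp.2.1 h0
  refine ⟨l, ?_⟩
  rw [sa_decomp_of_spectrum_pair hy hyfin hspec, hqp l hlmem hlne]

/-- a minimal projection's corner is one-dimensional -/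
private lemma corner_cx [Nontrivial A] {p : A} (hp : MinP p)
    (hfin : ∀ x : A, IsSelfAdjoint x → (spectrum ℝ x).Finite)
    (x : A) : ∃ c : ℂ, p * x * p = c • p := by
  set w : A := p * x * p with hw
  have hpw : p * w = w := by rw [hw, ← mul_assoc, ← mul_assoc, hp.1.1]
  have hwp : w * p = w := by rw [hw, mul_assoc, hp.1.1]
  have hpsw : p * star w = star w := by
    have h' : star (w * p) = p * star w := by rw [star_mul, hp.1.2]
    rw [hwp] at h'
    exact h'.symm
  have hswp : star w * p = star w := by
    have h' : star (p * w) = star w * p := by rw [star_mul, hp.1.2]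
    rw [hpw] at h'
    exact h'.symm
  -- real part
  set w1 : A := (2⁻¹ : ℂ) • (w + star w) with hw1
  have hw1sa : IsSelfAdjoint w1 := by
    rw [IsSelfAdjoint, hw1, star_smul, star_add, star_star, add_comm]
    congr 1
    simp
  have hpw1 : p * w1 = w1 := by
    rw [hw1, mul_smul_comm, mul_add, hpw, hpsw]
  have hw1p : w1 * p = w1 := by
    rw [hw1, smul_mul_assoc, add_mul, hwp, hswp]
  obtain ⟨c₁, hc₁⟩ := corner_sa hp hfin hw1sa hpw1 hw1p
  -- imaginary part
  set w2 : A := (2⁻¹ : ℂ) • (Complex.I • (star w - w)) with hw2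
  have hw2sa : IsSelfAdjoint w2 := by
    rw [IsSelfAdjoint, hw2, star_smul, star_smul, star_sub, star_star]
    have h1 : star (2⁻¹ : ℂ) = 2⁻¹ := by simp
    have h2 : star Complex.I = -Complex.I := by
      rw [Complex.star_def, Complex.conj_I]
    rw [h1, h2, neg_smul, ← smul_neg, neg_sub]
  have hpw2 : p * w2 = w2 := by
    rw [hw2, mul_smul_comm, mul_smul_comm, mul_sub, hpw, hpsw]
  have hw2p : w2 * p = w2 := by
    rw [hw2, smul_mul_assoc, smul_mul_assoc, sub_mul, hwp, hswp]
  obtain ⟨c₂, hc₂⟩ := corner_sa hp hfin hw2sa hpw2 hw2p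
  -- recombine
  have hrecomb : w = w1 + Complex.I • w2 := by
    rw [hw1, hw2]
    rw [smul_comm Complex.I (2⁻¹ : ℂ) (Complex.I • (star w - w))]
    rw [smul_smul Complex.I Complex.I (star w - w), Complex.I_mul_I, neg_one_smul]
    rw [← smul_add]
    rw [show w + star w + -(star w - w) = w + w by abel]
    rw [← two_smul ℂ w, smul_smul]
    norm_num
  refine ⟨(c₁ : ℂ) + Complex.I * (c₂ : ℂ), ?_⟩
  rw [hrecomb, hc₁, hc₂]
  have hcoe : ∀ (r : ℝ) (u : A), r • u = ((r : ℂ)) • u := by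
    intro r u
    rw [← Complex.coe_algebraMap, algebraMap_smul]
  rw [hcoe c₁ p, hcoe c₂ p, smul_smul, add_smul]


section Nontriv3
variable [Nontrivial A]

private lemma corner_off [Nontrivial A] {p q : A} (hp : MinP p) (hq : MinP q)
    (hfin : ∀ x : A, IsSelfAdjoint x → (spectrum ℝ x).Finite) :
    ∃ v : A, ∀ x : A, ∃ c : ℂ, p * x * q = c • v := by
  by_cases hzero : ∀ u : A, p * u * q = 0
  · exact ⟨0, fun x => ⟨0, by rw [hzero x, zero_smul]⟩⟩
  push_neg at hzero
  obtain ⟨u, hu⟩ := hzero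
  set v : A := p * u * q with hv
  refine ⟨v, fun x => ?_⟩
  set w : A := p * x * q with hwdef
  -- corner facts
  have hpv : p * v = v := by rw [hv, ← mul_assoc, ← mul_assoc, hp.1.1]
  have hvq : v * q = v := by rw [hv, mul_assoc, hq.1.1]
  have hpw : p * w = w := by rw [hwdef, ← mul_assoc, ← mul_assoc, hp.1.1]
  have hwq : w * q = w := by rw [hwdef, mul_assoc, hq.1.1]
  have hqsv : q * star v = star v := by
    have h' : star (v * q) = q * star v := by rw [star_mul, hq.1.2]
    rw [hvq] at h'
    exact h'.symm
  have hsvp : star v * p = star v := by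
    have h' : star (p * v) = star v * p := by rw [star_mul, hp.1.2]
    rw [hpv] at h'
    exact h'.symm
  -- star v * w lies in the corner of q
  have hcorn : ∀ z : A, q * z = z → z * q = z → ∃ c : ℂ, z = c • q := by
    intro z hz1 hz2
    obtain ⟨c, hc⟩ := corner_cx hq hfin z
    exact ⟨c, by rw [← hc, hz1, hz2]⟩
  have hcornP : ∀ z : A, p * z = z → z * p = z → ∃ c : ℂ, z = c • p := by
    intro z hz1 hz2
    obtain ⟨c, hc⟩ := corner_cx hp hfin z
    exact ⟨c, by rw [← hc, hz1, hz2]⟩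
  obtain ⟨c, hc⟩ := hcorn (star v * w)
    (by rw [← mul_assoc, hqsv]) (by rw [mul_assoc, hwq])
  obtain ⟨α, hα⟩ := hcorn (star v * v)
    (by rw [← mul_assoc, hqsv]) (by rw [mul_assoc, hvq])
  have hvne : v ≠ 0 := fun h => hu (hv ▸ h)
  have hαne : α ≠ 0 := by
    intro h0
    rw [h0, zero_smul] at hα
    exact hvne ((CStarRing.star_mul_self_eq_zero_iff v).mp hα)
  obtain ⟨γ, hγ⟩ := hcornP (v * star v)
    (by rw [← mul_assoc, hpv]) (by rw [mul_assoc, hsvp])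
  have hγne : γ ≠ 0 := by
    intro h0
    rw [h0, zero_smul] at hγ
    have : star (star v) * star v = 0 := by rwa [star_star]
    exact hvne (star_eq_zero.mp ((CStarRing.star_mul_self_eq_zero_iff (star v)).mp this))
  set z : A := w - (c * α⁻¹) • v with hz
  have hsvz : star v * z = 0 := by
    rw [hz, mul_sub, mul_smul_comm, hα, hc, smul_smul, mul_assoc,
      inv_mul_cancel₀ hαne, mul_one, sub_self]
  have hpz : p * z = z := by
    rw [hz, mul_sub, hpw, mul_smul_comm, hpv]
  have hγz : γ • z = 0 := by
    calc γ • z = (γ • p) * z := by rw [smul_mul_assoc, hpz]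
      _ = (v * star v) * z := by rw [hγ]
      _ = v * (star v * z) := mul_assoc _ _ _
      _ = 0 := by rw [hsvz, mul_zero]
  have hz0 : z = 0 := by
    rcases smul_eq_zero.mp hγz with h | h
    · exact absurd h hγne
    · exact h
  refine ⟨c * α⁻¹, ?_⟩
  rw [← sub_eq_zero]
  exact hz ▸ hz0

private lemma findim_branch2 [Nontrivial A]
    (hfin : ∀ x : A, IsSelfAdjoint x → (spectrum ℝ x).Finite)
    (hnop : ∀ p : ℕ → A, (∀ n, IsProjE (p n)) → (∀ n, p n ≠ 0) →
      (∀ i j, i ≠ j → p i * p j = 0) → False) :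
    FiniteDimensional ℂ A := by
  classical
  obtain ⟨F, hFmin, hForth, hFsum⟩ := exists_resolution hnop
  have hcorner : ∀ pq : A × A, ∃ v : A, pq.1 ∈ F → pq.2 ∈ F →
      ∀ x : A, ∃ c : ℂ, pq.1 * x * pq.2 = c • v := by
    rintro ⟨p, q⟩
    by_cases hmem : p ∈ F ∧ q ∈ F
    · obtain ⟨v, hvv⟩ := corner_off (hFmin p hmem.1) (hFmin q hmem.2) hfin
      exact ⟨v, fun _ _ => hvv⟩
    · exact ⟨0, fun h1 h2 => absurd ⟨h1, h2⟩ hmem⟩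
  choose v hv using hcorner
  set Sv : Finset A := (F ×ˢ F).image v with hSv
  refine ⟨⟨Sv, eq_top_iff.mpr fun x _ => ?_⟩⟩
  -- decompose x
  have hdecomp : x = ∑ p ∈ F, ∑ q ∈ F, p * x * q := by
    calc x = 1 * x * 1 := by rw [one_mul, mul_one]
      _ = (∑ p ∈ F, p) * x * (∑ q ∈ F, q) := by rw [hFsum]
      _ = ∑ p ∈ F, p * x * (∑ q ∈ F, q) := by rw [Finset.sum_mul, Finset.sum_mul]
      _ = ∑ p ∈ F, ∑ q ∈ F, p * x * q := by
          apply Finset.sum_congr rfl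
          intro p _
          rw [Finset.mul_sum]
  rw [hdecomp]
  apply Submodule.sum_mem
  intro p hp
  apply Submodule.sum_mem
  intro q hq
  obtain ⟨c, hc⟩ := hv (p, q) hp hq x
  rw [hc]
  apply Submodule.smul_mem
  apply Submodule.subset_span
  simp only [hSv, Finset.coe_image, Set.mem_image, Finset.mem_coe]
  exact ⟨(p, q), Finset.mem_product.mpr ⟨hp, hq⟩, rfl⟩


private lemma spectrum_infinite_case [Nontrivial A]
    (horth : ∀ e : ℕ → A, (∀ n, ‖e n‖ = 1) → (∀ n, 0 ≤ e n) →
      (∀ i j, i ≠ j → e i * e j = 0) → False)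
    {a : A} (ha : IsSelfAdjoint a) (hinf : (spectrum ℝ a).Infinite) : False := by
  let u := hinf.natEmbedding
  set f : ℕ → ℝ := fun n => (u n).1 with hf
  have hfinj : Function.Injective f := fun m n h => u.injective (Subtype.ext h)
  obtain ⟨g, hg | hg⟩ := exists_increasing_or_nonincreasing_subseq (· < · : ℝ → ℝ → Prop) f
  · obtain ⟨e, h1, h2, h3⟩ := orth_seq_of_strictMono ha (fun n => f (g n))
      (fun m n hmn => hg m n hmn) (fun n => (u (g n)).2)
    exact horth e h1 h2 h3
  · have hmono : StrictMono (fun n => - f (g n)) := by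
      intro m n hmn
      have hle : f (g n) ≤ f (g m) := not_lt.mp (hg m n hmn)
      have hne : f (g n) ≠ f (g m) := by
        intro h
        have := g.injective (hfinj h)
        omega
      simp only [neg_lt_neg_iff]
      exact lt_of_le_of_ne hle hne
    have hmem : ∀ n, - f (g n) ∈ spectrum ℝ (-a) := by
      intro n
      rw [← spectrum.neg_eq]
      exact Set.neg_mem_neg.mpr (u (g n)).2
    obtain ⟨e, h1, h2, h3⟩ := orth_seq_of_strictMono ha.neg _ hmono hmem
    exact horth e h1 h2 h3

private lemma findim_subsingleton [Subsingleton A] : FiniteDimensional ℂ A := by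
  refine ⟨⟨∅, eq_top_iff.mpr fun x _ => ?_⟩⟩
  rw [Subsingleton.elim x 0]
  exact Submodule.zero_mem _


end Nontriv3

private lemma findim_subsingleton' {B : Type*} [CStarAlgebra B] [Subsingleton B] :
    FiniteDimensional ℂ B := by
  refine ⟨⟨∅, eq_top_iff.mpr fun x _ => ?_⟩⟩
  rw [Subsingleton.elim x 0]
  exact Submodule.zero_mem _

end Part2

/-- If the topologies `τ_V̂` and `τ_V'` coincide on the standard Hilbert module `V = ℓ²(A)`
over a unital C*-algebra `A`, then `V` is self-dual (every bounded `A`-linear functional,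
i.e. every sequence with uniformly bounded partial sums of `∑ b_i* b_i`, actually lies in
`ℓ²(A)`), and `A` is finite-dimensional. -/
theorem stdMod_selfDual_of_topologies_coincide (h : tauHatStd A = tauDualStd A) :
    (∀ f : StdDual A, Summable fun i => star (f.1 i) * f.1 i) ∧ FiniteDimensional ℂ A := by
  have key : ∀ f : StdDual A, Summable fun i => star (f.1 i) * f.1 i :=
    fun f => key_summable h f
  refine ⟨key, ?_⟩
  rcases subsingleton_or_nontrivial A with hsub | hnt
  · exact findim_subsingleton'
  letI := CStarAlgebra.spectralOrder A
  haveI := CStarAlgebra.spectralOrderedRing A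
  have horth : ∀ e : ℕ → A, (∀ n, ‖e n‖ = 1) → (∀ n, 0 ≤ e n) →
      (∀ i j, i ≠ j → e i * e j = 0) → False := by
    intro e h1 h2 h3
    have hbound := sum_orth_bound e (fun n => (h1 n).le) h2 h3
    have hsummable := key ⟨e, 1, hbound⟩
    have h0 : Filter.Tendsto (fun i => star (e i) * e i) Filter.atTop (nhds 0) :=
      hsummable.tendsto_atTop_zero
    have hnorm : Filter.Tendsto (fun i => ‖star (e i) * e i‖) Filter.atTop (nhds 0) := by
      have := h0.norm
      rwa [norm_zero] at this
    have hconst : (fun i => ‖star (e i) * e i‖) = fun _ => (1 : ℝ) := by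
      funext i
      rw [CStarRing.norm_star_mul_self, h1 i, one_mul]
    rw [hconst] at hnorm
    have h10 : (1 : ℝ) = 0 := tendsto_nhds_unique tendsto_const_nhds hnorm
    norm_num at h10
  by_cases hfin : ∀ x : A, IsSelfAdjoint x → (spectrum ℝ x).Finite
  · exact findim_branch2 hfin (fun p hp hne ho => no_orth_proj_seq horth p hp hne ho)
  · push_neg at hfin
    obtain ⟨a, ha, hainf⟩ := hfin
    exact (spectrum_infinite_case horth ha hainf).elim
end

section
/- In the commutative C*-algebra A = C₀(0,1], viewed as a Hilbert A-module over itself with inner product ⟨f,g⟩ = f̄g, there exists a sequence {f_n} such that ‖g·f_n‖ → 0 for every g ∈ A (τ_{V̂}-convergence to zero) but ‖f_n‖ = 1 for all n; hence C₀(0,1] does not have the module Schur property. -/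
open Filter Topology ZeroAtInfty Set

noncomputable def tentR (n : ℕ) (x : ℝ) : ℝ := max 0 (1 - |2 * (n+1) * x - 1|)

lemma tentR_cont (n : ℕ) : Continuous (tentR n) := by
  unfold tentR; fun_prop

lemma tentR_zero (n : ℕ) : tentR n 0 = 0 := by
  simp [tentR]

lemma tentR_le_one (n : ℕ) (x : ℝ) : tentR n x ≤ 1 := by
  unfold tentR
  have : (0:ℝ) ≤ |2 * (n+1) * x - 1| := abs_nonneg _
  simp only [max_le_iff]; constructor <;> linarith

lemma tentR_nonneg (n : ℕ) (x : ℝ) : 0 ≤ tentR n x := le_max_left _ _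

lemma tentR_peak (n : ℕ) : tentR n (1 / (2 * (n+1))) = 1 := by
  unfold tentR
  have h : (2 * ((n:ℝ)+1)) ≠ 0 := by positivity
  rw [mul_one_div, div_self h]
  norm_num

lemma tentR_eq_zero (n : ℕ) (x : ℝ) (hx : 1 / (n+1) < x) : tentR n x = 0 := by
  unfold tentR
  have hn : (0:ℝ) < (n:ℝ) + 1 := by positivity
  have hx' : 1 < ((n:ℝ)+1) * x := by
    rw [div_lt_iff₀ hn] at hx; linarith [hx]
  have h2 : 1 < 2 * ((n:ℝ)+1) * x - 1 := by nlinarith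
  have habs : 1 < |2 * ((n:ℝ)+1) * x - 1| := lt_of_lt_of_le h2 (le_abs_self _)
  rw [max_eq_left]; linarith

lemma tendsto_val_cocompact :
    Tendsto (fun x : Ioc (0:ℝ) 1 => (x : ℝ)) (cocompact _) (𝓝 0) := by
  rw [hasBasis_cocompact.tendsto_iff Metric.nhds_basis_ball]
  intro ε hε
  refine ⟨Subtype.val ⁻¹' Icc ε 1, ?_, ?_⟩
  · rw [IsEmbedding.subtypeVal.isCompact_iff]
    have him : Subtype.val '' ((Subtype.val : Ioc (0:ℝ) 1 → ℝ) ⁻¹' Icc ε 1)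
        = Ioc 0 1 ∩ Icc ε 1 := Subtype.image_preimage_coe _ _
    have heq : Ioc (0:ℝ) 1 ∩ Icc ε 1 = Icc ε 1 := by
      apply inter_eq_self_of_subset_right
      intro x hx
      exact ⟨lt_of_lt_of_le hε hx.1, hx.2⟩
    rw [him, heq]
    exact isCompact_Icc
  · intro x hx
    have hx' : ¬ (ε ≤ (x:ℝ) ∧ (x:ℝ) ≤ 1) := hx
    have hx1 := x.2.2
    have hx0 := x.2.1
    have hlt : (x:ℝ) < ε := by
      by_contra h
      exact hx' ⟨le_of_not_gt h, hx1⟩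
    simpa [Real.dist_eq, abs_of_pos hx0] using hlt

lemma exists_delta {K : Set (Ioc (0:ℝ) 1)} (hK : IsCompact K) :
    ∃ δ > 0, ∀ x : Ioc (0:ℝ) 1, (x:ℝ) < δ → x ∉ K := by
  rcases K.eq_empty_or_nonempty with h | h
  · exact ⟨1, one_pos, by simp [h]⟩
  · obtain ⟨x₀, hx₀, hmin⟩ :=
      hK.exists_isMinOn h continuous_subtype_val.continuousOn
    exact ⟨x₀, x₀.2.1, fun x hx hxK => absurd (hmin hxK) (not_le.mpr hx)⟩

noncomputable def fseq (n : ℕ) : C₀(Ioc (0:ℝ) 1, ℂ) where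
  toFun := fun x => ((tentR n x : ℝ) : ℂ)
  continuous_toFun := by
    exact (Complex.continuous_ofReal.comp (tentR_cont n)).comp continuous_subtype_val
  zero_at_infty' := by
    have h : Tendsto (fun x : Ioc (0:ℝ) 1 => ((tentR n x : ℝ) : ℂ)) (cocompact _)
        (𝓝 ((tentR n 0 : ℝ) : ℂ)) :=
      ((Complex.continuous_ofReal.comp (tentR_cont n)).tendsto 0).comp tendsto_val_cocompact
    simpa [tentR_zero] using h

lemma fseq_norm_apply (n : ℕ) (x : Ioc (0:ℝ) 1) : ‖fseq n x‖ = tentR n x := by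
  simp [fseq, ZeroAtInftyContinuousMap.coe_mk, Complex.norm_real,
    abs_of_nonneg (tentR_nonneg n x)]

/-- In the C*-algebra `A = C₀((0,1], ℂ)`, viewed as a Hilbert module over itself with
`⟪f, g⟫ = f̄ g`, there is a sequence `{f n}` of norm-one elements with `‖⟪g, f n⟫‖ → 0`
for every `g ∈ A`; hence `C₀((0,1], ℂ)` does not have the module Schur property. -/
theorem c0_Ioc_not_module_schur :
    ∃ f : ℕ → C₀(Set.Ioc (0 : ℝ) 1, ℂ),
      (∀ g : C₀(Set.Ioc (0 : ℝ) 1, ℂ),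
        Tendsto (fun n => ‖star g * f n‖) atTop (𝓝 0)) ∧
      ∀ n, ‖f n‖ = 1 := by
  refine ⟨fseq, ?_, ?_⟩
  · intro g
    rw [NormedAddCommGroup.tendsto_nhds_zero]
    intro ε hε
    have hg : ∀ᶠ x in cocompact (Ioc (0:ℝ) 1), dist (g x) 0 < ε/2 := by
      have := g.zero_at_infty'
      exact Metric.tendsto_nhds.mp this (ε/2) (by positivity)
    obtain ⟨K, hKc, hKg⟩ := hasBasis_cocompact.eventually_iff.mp hg
    obtain ⟨δ, hδ, hδK⟩ := exists_delta hKc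
    obtain ⟨N, hN⟩ := exists_nat_gt (1/δ)
    filter_upwards [eventually_ge_atTop N] with n hn
    have hbound : ‖star g * fseq n‖ ≤ ε/2 := by
      rw [← ZeroAtInftyContinuousMap.norm_toBCF_eq_norm]
      refine (BoundedContinuousFunction.norm_le (by positivity)).mpr fun x => ?_
      have happly : (star g * fseq n).toBCF x = star (g x) * fseq n x := rfl
      rw [happly, norm_mul, norm_star]
      by_cases hx : (x:ℝ) ≤ 1/(n+1)
      · have h1 : (1:ℝ)/(n+1) ≤ 1/(N+1) := by
          apply one_div_le_one_div_of_le (by positivity)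
          have : (N:ℝ) ≤ n := Nat.cast_le.mpr hn
          linarith
        have h2 : (1:ℝ)/(N+1) < δ := by
          rw [div_lt_iff₀ (by positivity)]
          rw [div_lt_iff₀ hδ] at hN
          nlinarith
        have hxK : x ∉ K := hδK x (by linarith)
        have hgx : ‖g x‖ < ε/2 := by simpa [dist_eq_norm] using hKg hxK
        calc ‖g x‖ * ‖fseq n x‖ ≤ ‖g x‖ * 1 := by
              apply mul_le_mul_of_nonneg_left _ (norm_nonneg _)
              rw [fseq_norm_apply]; exact tentR_le_one n x
          _ = ‖g x‖ := mul_one _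
          _ ≤ ε/2 := le_of_lt hgx
      · have : tentR n x = 0 := tentR_eq_zero n x (lt_of_not_ge hx)
        rw [fseq_norm_apply, this, mul_zero]
        positivity
    have : ‖star g * fseq n‖ < ε := lt_of_le_of_lt hbound (by linarith)
    simpa [Real.norm_eq_abs, abs_of_nonneg (norm_nonneg _)] using this
  · intro n
    apply le_antisymm
    · rw [← ZeroAtInftyContinuousMap.norm_toBCF_eq_norm]
      refine (BoundedContinuousFunction.norm_le zero_le_one).mpr fun x => ?_
      have : (fseq n).toBCF x = fseq n x := rfl
      rw [this, fseq_norm_apply]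
      exact tentR_le_one n x
    · have hmem : (1 / (2 * ((n:ℝ)+1))) ∈ Ioc (0:ℝ) 1 := by
        constructor
        · positivity
        · rw [div_le_one (by positivity)]
          have : (0:ℝ) ≤ (n:ℝ) := Nat.cast_nonneg n
          linarith
      set x₀ : Ioc (0:ℝ) 1 := ⟨_, hmem⟩
      have h1 : ‖fseq n x₀‖ = 1 := by
        rw [fseq_norm_apply]
        exact tentR_peak n
      calc (1:ℝ) = ‖(fseq n).toBCF x₀‖ := h1.symm
        _ ≤ ‖(fseq n).toBCF‖ := BoundedContinuousFunction.norm_coe_le_norm _ _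
        _ = ‖fseq n‖ := ZeroAtInftyContinuousMap.norm_toBCF_eq_norm
end

section
/- A C*-algebra A with a strictly positive element (in particular any separable C*-algebra), viewed as a Hilbert A-module over itself, has the module Schur property if and only if A is unital. -/
open Filter Topology

/-- A C*-algebra `A` with a strictly positive element (i.e. a positive `h` with `hAh` dense
in `A`), viewed as a Hilbert `A`-module over itself with `⟪a, b⟫ = a* b`, has the module
Schur property (every sequence `{x n}` with `b* x n` norm-Cauchy for all `b ∈ A` is itself
norm-Cauchy) if and only if `A` is unital. -/
theorem module_schur_iff_unital {A : Type*} [NonUnitalCStarAlgebra A] [PartialOrder A] [StarOrderedRing A]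
    (hsp : ∃ h : A, 0 ≤ h ∧ Dense (Set.range fun a : A => h * a * h)) :
    (∀ x : ℕ → A, (∀ b : A, CauchySeq fun n => star b * x n) → CauchySeq x) ↔
    ∃ e : A, ∀ a : A, e * a = a ∧ a * e = a := by
  constructor
  · intro hschur
    obtain ⟨h, hpos, hdense⟩ := hsp
    have hsa : IsSelfAdjoint h := .of_nonneg hpos
    have hspec : ∀ t ∈ quasispectrum ℝ h, 0 ≤ t := quasispectrum_nonneg_of_nonneg h hpos
    set e : ℕ → A := fun n => cfcₙ (fun t : ℝ => t / (t + ((n : ℝ) + 1)⁻¹)) h with he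
    have hcpos : ∀ n : ℕ, (0:ℝ) < ((n : ℝ) + 1)⁻¹ := fun n => by positivity
    have hcont : ∀ n : ℕ, ContinuousOn (fun t : ℝ => t / (t + ((n : ℝ) + 1)⁻¹))
        (quasispectrum ℝ h) := by
      intro n
      apply ContinuousOn.div continuousOn_id (by fun_prop)
      intro t ht
      have h1 := hspec t ht
      have h2 := hcpos n
      positivity
    have hbd : ∀ n : ℕ, ‖e n‖ ≤ 1 := by
      intro n
      apply norm_cfcₙ_le
      intro t ht
      have h1 := hspec t ht
      have h2 := hcpos n
      have hden : (0:ℝ) < t + ((n : ℝ) + 1)⁻¹ := by positivity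
      rw [Real.norm_eq_abs, abs_of_nonneg (by positivity), div_le_one hden]
      linarith
    have hkey : ∀ n : ℕ, ‖h * e n - h‖ ≤ ((n : ℝ) + 1)⁻¹ := by
      intro n
      have heq : h * e n - h
          = cfcₙ (fun t : ℝ => t * (t / (t + ((n : ℝ) + 1)⁻¹)) - t) h := by
        rw [cfcₙ_sub (fun t : ℝ => t * (t / (t + ((n : ℝ) + 1)⁻¹))) (fun t : ℝ => t) h
            (continuousOn_id.mul (hcont n)) (by simp) continuousOn_id (by simp),
          cfcₙ_mul (fun t : ℝ => t) _ h continuousOn_id (by simp) (hcont n) (by simp),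
          cfcₙ_id' ℝ h]
      rw [heq]
      apply norm_cfcₙ_le
      intro t ht
      have h1 := hspec t ht
      have h2 := hcpos n
      set c : ℝ := ((n : ℝ) + 1)⁻¹
      have hden : (0:ℝ) < t + c := by positivity
      have h3 : t * (t / (t + c)) - t = -(t * c / (t + c)) := by
        field_simp
        ring
      rw [h3, norm_neg, Real.norm_eq_abs, abs_of_nonneg (by positivity),
        div_le_iff₀ hden]
      nlinarith [sq_nonneg c]
    have htend : ∀ b : A, Tendsto (fun n => b * e n) atTop (𝓝 b) := by
      intro b
      rw [Metric.tendsto_atTop]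
      intro ε hε
      obtain ⟨y, ⟨a, rfl⟩, hy⟩ := hdense.exists_dist_lt b (show (0:ℝ) < ε/4 by positivity)
      rw [dist_eq_norm] at hy
      obtain ⟨N, hN⟩ := exists_nat_gt (‖h * a‖ * 4 / ε)
      refine ⟨N, fun n hn => ?_⟩
      have hn1 : (0:ℝ) < (n : ℝ) + 1 := by positivity
      have h1 : ‖h * a‖ * 4 / ε < (n : ℝ) + 1 := by
        refine hN.trans_le ?_
        have : (N : ℝ) ≤ (n : ℝ) := by exact_mod_cast hn
        linarith
      rw [div_lt_iff₀ hε] at h1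
      have h2 : ‖h * a‖ * ((n : ℝ) + 1)⁻¹ < ε / 4 := by
        rw [← div_eq_mul_inv, div_lt_iff₀ hn1]
        linarith
      have A1 : ‖(b - h * a * h) * e n‖ ≤ ‖b - h * a * h‖ := by
        calc ‖(b - h * a * h) * e n‖ ≤ ‖b - h * a * h‖ * ‖e n‖ := norm_mul_le _ _
          _ ≤ ‖b - h * a * h‖ * 1 :=
            mul_le_mul_of_nonneg_left (hbd n) (norm_nonneg _)
          _ = ‖b - h * a * h‖ := mul_one _
      have A2 : ‖(h * a) * (h * e n - h)‖ ≤ ‖h * a‖ * ((n : ℝ) + 1)⁻¹ :=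
        (norm_mul_le _ _).trans (mul_le_mul_of_nonneg_left (hkey n) (norm_nonneg _))
      have A3 : ‖h * a * h - b‖ < ε / 4 := by rw [norm_sub_rev]; exact hy
      rw [dist_eq_norm]
      calc ‖b * e n - b‖
          = ‖(b - h * a * h) * e n + (h * a) * (h * e n - h) + (h * a * h - b)‖ := by
            congr 1
            noncomm_ring
        _ ≤ ‖(b - h * a * h) * e n‖ + ‖(h * a) * (h * e n - h)‖ + ‖h * a * h - b‖ :=
            norm_add₃_le
        _ < ε := by linarith
    have hcauchy : CauchySeq e := hschur e fun b => (htend (star b)).cauchySeq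
    obtain ⟨u, hu⟩ := cauchySeq_tendsto_of_complete hcauchy
    have hru : ∀ c : A, c * u = c := fun c =>
      tendsto_nhds_unique (hu.const_mul c) (htend c)
    have hlu : ∀ a : A, star u * a = a := by
      intro a
      have := congrArg star (hru (star a))
      simpa using this
    have huu : star u = u := by
      rw [← hru (star u), hlu u]
    refine ⟨u, fun a => ⟨?_, hru a⟩⟩
    rw [← huu, hlu a]
  · rintro ⟨u, hu⟩ x hx
    have : (fun n => star (star u) * x n) = x :=
      funext fun n => by rw [star_star, (hu (x n)).1]
    exact this ▸ hx (star u)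
end

section
/- Let V be a Hilbert C*-module decomposed as an orthogonal direct sum V = V₁ ⊕ V₂. Then V has the module Schur property if and only if both V₁ and V₂ have the module Schur property. -/
open Filter Topology

/-- The Hilbert C*-module class `CStarModule` as it stood in Mathlib of December 2024
(right modules: `A` acts through `Aᵐᵒᵖ`). -/
class RightCStarModule (A : outParam <| Type*) (E : Type*) [NonUnitalSemiring A] [StarRing A]
    [Module ℂ A] [AddCommGroup E] [Module ℂ E] [PartialOrder A] [SMul Aᵐᵒᵖ E] [Norm A] [Norm E]
    extends Inner A E where
  inner_add_right {x} {y} {z} : inner x (y + z) = inner x y + inner x z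
  inner_self_nonneg {x} : 0 ≤ inner x x
  inner_self {x} : inner x x = 0 ↔ x = 0
  inner_op_smul_right {a : A} {x y : E} : inner x (MulOpposite.op a • y) = inner x y * a
  inner_smul_right_complex {z : ℂ} {x} {y} : inner x (z • y) = z • inner x y
  star_inner x y : star (inner x y) = inner y x
  norm_eq_sqrt_norm_inner_self x : ‖x‖ = √‖inner x x‖

variable (A : Type*) {E : Type*} [NonUnitalCStarAlgebra A] [PartialOrder A] [StarOrderedRing A]
  [NormedAddCommGroup E] [NormedSpace ℂ E] [SMul Aᵐᵒᵖ E] [RightCStarModule A E]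

/-- A subset `S` of a Hilbert C*-module has the module Schur property if every sequence in
`S` which is Cauchy for all the seminorms `x ↦ ‖⟪z, x⟫‖`, `z ∈ S`, is norm-Cauchy. -/
def ModuleSchurOn (S : Set E) : Prop :=
  ∀ x : ℕ → E, (∀ n, x n ∈ S) →
    (∀ z ∈ S, CauchySeq fun n => (inner A z (x n) : A)) → CauchySeq x

theorem rcsm_inner_add_left {A : Type*} {E : Type*} [NonUnitalCStarAlgebra A] [PartialOrder A]
    [StarOrderedRing A] [NormedAddCommGroup E] [NormedSpace ℂ E] [SMul Aᵐᵒᵖ E]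
    [RightCStarModule A E] (x y z : E) : (inner A (x + y) z : A) = inner A x z + inner A y z := by
  rw [← RightCStarModule.star_inner, RightCStarModule.inner_add_right, star_add,
    RightCStarModule.star_inner, RightCStarModule.star_inner]

variable {A}

/-- Let a Hilbert C*-module `E` be the orthogonal direct sum of closed submodules `V₁` and
`V₂`. Then `E` has the module Schur property iff both `V₁` and `V₂` do. -/
theorem module_schur_direct_sum [CompleteSpace E] (V₁ V₂ : Submodule ℂ E)
    (h₁c : IsClosed (V₁ : Set E)) (h₂c : IsClosed (V₂ : Set E))
    (h₁s : ∀ (a : A), ∀ x ∈ V₁, MulOpposite.op a • x ∈ V₁)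
    (h₂s : ∀ (a : A), ∀ x ∈ V₂, MulOpposite.op a • x ∈ V₂)
    (horth : ∀ x ∈ V₁, ∀ y ∈ V₂, (inner A x y : A) = 0)
    (hsum : ∀ v : E, ∃ x ∈ V₁, ∃ y ∈ V₂, v = x + y) :
    ModuleSchurOn A (Set.univ : Set E) ↔
      ModuleSchurOn A (V₁ : Set E) ∧ ModuleSchurOn A (V₂ : Set E) := by
  have horth' : ∀ y ∈ V₂, ∀ x ∈ V₁, (inner A y x : A) = 0 := fun y hy x hx => by
    rw [← RightCStarModule.star_inner, horth x hx y hy, star_zero]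
  constructor
  · intro h
    constructor
    · intro x hx hc
      refine h x (fun n => trivial) (fun z _ => ?_)
      obtain ⟨z₁, hz₁, z₂, hz₂, rfl⟩ := hsum z
      have : (fun n => (inner A (z₁ + z₂) (x n) : A)) = fun n => (inner A z₁ (x n) : A) := by
        funext n
        rw [rcsm_inner_add_left, horth' z₂ hz₂ (x n) (hx n), add_zero]
      rw [this]
      exact hc z₁ hz₁
    · intro x hx hc
      refine h x (fun n => trivial) (fun z _ => ?_)
      obtain ⟨z₁, hz₁, z₂, hz₂, rfl⟩ := hsum z
      have : (fun n => (inner A (z₁ + z₂) (x n) : A)) = fun n => (inner A z₂ (x n) : A) := by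
        funext n
        rw [rcsm_inner_add_left, horth z₁ hz₁ (x n) (hx n), zero_add]
      rw [this]
      exact hc z₂ hz₂
  · rintro ⟨h₁, h₂⟩ x _ hc
    choose a ha b hb hab using fun n => hsum (x n)
    have hca : CauchySeq a := by
      refine h₁ a ha (fun z hz => ?_)
      have : (fun n => (inner A z (a n) : A)) = fun n => (inner A z (x n) : A) := by
        funext n
        rw [hab n, RightCStarModule.inner_add_right, horth z hz (b n) (hb n), add_zero]
      rw [this]
      exact hc z trivial
    have hcb : CauchySeq b := by
      refine h₂ b hb (fun z hz => ?_)
      have : (fun n => (inner A z (b n) : A)) = fun n => (inner A z (x n) : A) := by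
        funext n
        rw [hab n, RightCStarModule.inner_add_right, horth' z hz (a n) (ha n), zero_add]
      rw [this]
      exact hc z trivial
    have : x = fun n => a n + b n := funext hab
    rw [this]
    exact hca.add hcb
end

section
/- Every Hilbert C*-module V has the property (mBS1): every sequence {x_n} in V with ‖⟨z, x_n⟩‖ → 0 for all z ∈ V admits a subsequence {x_{n(i)}} such that ‖(1/k) Σ_{i=1}^{k} x_{n(i)}‖ → 0 as k → ∞. -/
open Filter Topology

variable {A : Type*} [NonUnitalCStarAlgebra A] [PartialOrder A] [StarOrderedRing A]
variable {E : Type*} [NormedAddCommGroup E] [NormedSpace ℂ E] [SMul A E] [CStarModule A E]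

local notation "⟪" x ", " y "⟫" => inner (𝕜 := A) x y

set_option maxHeartbeats 1000000 in
/-- Every Hilbert C*-module has property (mBS1): every `τ_V̂`-null sequence `{x n}`
(`‖⟪z, x n⟫‖ → 0` for all `z`) admits a subsequence whose Cesàro means tend to `0` in
norm. -/
theorem module_mBS1 [CompleteSpace E] (x : ℕ → E)
    (h : ∀ z : E, Tendsto (fun n => ‖⟪z, x n⟫‖) atTop (𝓝 0)) :
    ∃ φ : ℕ → ℕ, StrictMono φ ∧
      Tendsto (fun k => ‖(((k : ℕ) + 1 : ℝ))⁻¹ • ∑ i ∈ Finset.range (k + 1), x (φ i)‖)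
        atTop (𝓝 0) := by
  classical
  -- Step 1 : uniform boundedness of the sequence, via Banach–Steinhaus
  obtain ⟨C, hC⟩ : ∃ C, ∀ n, ‖(CStarModule.innerSL (A := A) (x n) : E →L[ℂ] A)‖ ≤ C := by
    apply banach_steinhaus
    intro z
    obtain ⟨C, hC⟩ := (h z).bddAbove_range
    refine ⟨C, fun n => ?_⟩
    have h1 : (CStarModule.innerSL (A := A) (x n) : E →L[ℂ] A) z = ⟪x n, z⟫ := rfl
    have h2 : ‖⟪x n, z⟫‖ = ‖⟪z, x n⟫‖ := by
      rw [← CStarModule.star_inner, norm_star]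
    rw [h1, h2]
    exact hC ⟨n, rfl⟩
  set M : ℝ := max C 0 with hMdef
  have hM0 : (0:ℝ) ≤ M := le_max_right _ _
  have hM : ∀ n, ‖x n‖ ≤ M := by
    intro n
    have h1 : ‖x n‖ ^ 2 = ‖⟪x n, x n⟫‖ := CStarModule.norm_sq_eq A
    have h2 : ‖⟪x n, x n⟫‖ ≤ M * ‖x n‖ := by
      have := (CStarModule.innerSL (A := A) (x n) : E →L[ℂ] A).le_opNorm (x n)
      have h3 : (CStarModule.innerSL (A := A) (x n) : E →L[ℂ] A) (x n) = ⟪x n, x n⟫ := rfl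
      rw [h3] at this
      calc ‖⟪x n, x n⟫‖ ≤ ‖(CStarModule.innerSL (A := A) (x n) : E →L[ℂ] A)‖ * ‖x n‖ := this
        _ ≤ M * ‖x n‖ := by
            gcongr
            exact (hC n).trans (le_max_left _ _)
    nlinarith [norm_nonneg (x n)]
  -- Step 2 : extraction of a subsequence with small mutual inner products
  obtain ⟨φ, -, hφ⟩ := exists_seq_of_forall_finset_exists (fun _ : ℕ => True)
    (fun a b => a < b ∧ ‖⟪x a, x b⟫‖ ≤ (1/2 : ℝ) ^ a) (by
      intro s _
      have hev : ∀ᶠ n in atTop, ∀ a ∈ s, a < n ∧ ‖⟪x a, x n⟫‖ ≤ (1/2 : ℝ) ^ a := by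
        rw [eventually_all_finset]
        intro a _
        filter_upwards [eventually_gt_atTop a,
          (h (x a)).eventually_le_const (by positivity : (0:ℝ) < (1/2 : ℝ) ^ a)]
          with n h1 h2 using ⟨h1, h2⟩
      obtain ⟨y, hy⟩ := hev.exists
      exact ⟨y, trivial, hy⟩)
  have hφmono : StrictMono φ := fun m n hmn => (hφ m n hmn).1
  refine ⟨φ, hφmono, ?_⟩
  -- Step 3 : the key estimate on the norm of partial sums
  have key : ∀ k : ℕ, ‖∑ i ∈ Finset.range (k+1), x (φ i)‖ ^ 2
      ≤ ((k:ℝ)+1) * (M ^ 2 + 4) := by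
    intro k
    set K := k + 1 with hK
    rw [CStarModule.norm_sq_eq A]
    have expand : ⟪∑ i ∈ Finset.range K, x (φ i), ∑ j ∈ Finset.range K, x (φ j)⟫
        = ∑ i ∈ Finset.range K, ∑ j ∈ Finset.range K, ⟪x (φ i), x (φ j)⟫ := by
      rw [CStarModule.inner_sum_left]
      exact Finset.sum_congr rfl fun i _ => CStarModule.inner_sum_right
    rw [expand]
    have hbound : ∀ i ∈ Finset.range K, ∀ j ∈ Finset.range K,
        ‖⟪x (φ i), x (φ j)⟫‖ ≤ (if i = j then M ^ 2 else 0) + (1/2:ℝ)^i + (1/2:ℝ)^j := by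
      intro i _ j _
      rcases lt_trichotomy i j with hij | hij | hij
      · have h1 := (hφ i j hij).2
        have h2 : ((1:ℝ)/2) ^ (φ i) ≤ (1/2:ℝ) ^ i :=
          pow_le_pow_of_le_one (by norm_num) (by norm_num) (hφmono.le_apply)
        have : ¬ (i = j) := hij.ne
        simp only [this, if_false, zero_add]
        have hpos : (0:ℝ) ≤ (1/2:ℝ)^j := by positivity
        linarith [h1.trans h2]
      · subst hij
        simp only [if_pos rfl, if_true]
        have : ‖⟪x (φ i), x (φ i)⟫‖ = ‖x (φ i)‖ ^ 2 := (CStarModule.norm_sq_eq A).symm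
        rw [this]
        have hpos1 : (0:ℝ) ≤ (1/2:ℝ)^i := by positivity
        have := hM (φ i)
        nlinarith [norm_nonneg (x (φ i))]
      · have h1 := (hφ j i hij).2
        have h2 : ((1:ℝ)/2) ^ (φ j) ≤ (1/2:ℝ) ^ j :=
          pow_le_pow_of_le_one (by norm_num) (by norm_num) (hφmono.le_apply)
        have hstar : ‖⟪x (φ i), x (φ j)⟫‖ = ‖⟪x (φ j), x (φ i)⟫‖ := by
          rw [← CStarModule.star_inner, norm_star]
        have : ¬ (i = j) := hij.ne'
        simp only [this, if_false, zero_add]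
        have hpos : (0:ℝ) ≤ (1/2:ℝ)^i := by positivity
        rw [hstar]
        linarith [h1.trans h2]
    calc ‖∑ i ∈ Finset.range K, ∑ j ∈ Finset.range K, ⟪x (φ i), x (φ j)⟫‖
        ≤ ∑ i ∈ Finset.range K, ‖∑ j ∈ Finset.range K, ⟪x (φ i), x (φ j)⟫‖ :=
          norm_sum_le _ _
      _ ≤ ∑ i ∈ Finset.range K, ∑ j ∈ Finset.range K, ‖⟪x (φ i), x (φ j)⟫‖ :=
          Finset.sum_le_sum fun i _ => norm_sum_le _ _
      _ ≤ ∑ i ∈ Finset.range K, ∑ j ∈ Finset.range K,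
            ((if i = j then M ^ 2 else 0) + (1/2:ℝ)^i + (1/2:ℝ)^j) :=
          Finset.sum_le_sum fun i hi => Finset.sum_le_sum fun j hj => hbound i hi j hj
      _ = (∑ i ∈ Finset.range K, ∑ j ∈ Finset.range K, (if i = j then M ^ 2 else 0))
          + (∑ i ∈ Finset.range K, ∑ j ∈ Finset.range K, (1/2:ℝ)^i)
          + (∑ i ∈ Finset.range K, ∑ j ∈ Finset.range K, (1/2:ℝ)^j) := by
          simp [Finset.sum_add_distrib]
      _ ≤ (K:ℝ) * M ^ 2 + (K:ℝ) * 2 + (K:ℝ) * 2 := by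
          gcongr ?_ + ?_ + ?_
          · apply le_of_eq
            have : ∀ i ∈ Finset.range K,
                (∑ j ∈ Finset.range K, (if i = j then M ^ 2 else 0)) = M ^ 2 := by
              intro i hi
              rw [Finset.sum_ite_eq]
              simp [hi]
            rw [Finset.sum_congr rfl this]
            simp [mul_comm]
          · have : ∀ i ∈ Finset.range K,
                (∑ _j ∈ Finset.range K, (1/2:ℝ)^i) = (K:ℝ) * (1/2:ℝ)^i := by
              intro i _
              simp [mul_comm]
            rw [Finset.sum_congr rfl this, ← Finset.mul_sum]
            gcongr
            exact sum_geometric_two_le K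
          · have : (∑ i ∈ Finset.range K, ∑ j ∈ Finset.range K, (1/2:ℝ)^j)
                = (K:ℝ) * ∑ j ∈ Finset.range K, (1/2:ℝ)^j := by
              rw [Finset.sum_const, nsmul_eq_mul, Finset.card_range]
            rw [this]
            gcongr
            exact sum_geometric_two_le K
      _ = ((k:ℝ)+1) * (M ^ 2 + 4) := by
          have : ((K:ℕ):ℝ) = (k:ℝ) + 1 := by push_cast [hK]; ring
          rw [this]; ring
  -- Step 4 : conclusion by squeezing
  have hK0 : ∀ k : ℕ, (0:ℝ) < (k:ℝ) + 1 := fun k => by positivity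
  have hub : ∀ k : ℕ, ‖(((k : ℕ) + 1 : ℝ))⁻¹ • ∑ i ∈ Finset.range (k + 1), x (φ i)‖
      ≤ Real.sqrt ((M ^ 2 + 4) * (((k:ℝ)+1)⁻¹)) := by
    intro k
    rw [← Real.sqrt_sq (norm_nonneg _)]
    apply Real.sqrt_le_sqrt
    have hnorm : ‖(((k : ℕ) + 1 : ℝ))⁻¹ • ∑ i ∈ Finset.range (k + 1), x (φ i)‖
        = (((k:ℝ)+1))⁻¹ * ‖∑ i ∈ Finset.range (k + 1), x (φ i)‖ := by
      rw [norm_smul, Real.norm_eq_abs, abs_inv, abs_of_pos (hK0 k)]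
    rw [hnorm, mul_pow]
    have h1 := key k
    have h2 : ((((k:ℝ)+1))⁻¹) ^ 2 * ‖∑ i ∈ Finset.range (k + 1), x (φ i)‖ ^ 2
        ≤ ((((k:ℝ)+1))⁻¹) ^ 2 * (((k:ℝ)+1) * (M ^ 2 + 4)) := by
      gcongr
    refine h2.trans (le_of_eq ?_)
    field_simp
  refine squeeze_zero (fun k => norm_nonneg _) hub ?_
  have h1 : Tendsto (fun k : ℕ => ((k:ℝ)+1)⁻¹) atTop (𝓝 0) :=
    (tendsto_atTop_add_const_right atTop 1 tendsto_natCast_atTop_atTop).inv_tendsto_atTop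
  have h2 : Tendsto (fun k : ℕ => (M ^ 2 + 4) * (((k:ℝ)+1)⁻¹)) atTop (𝓝 0) := by
    simpa using h1.const_mul (M ^ 2 + 4)
  have h3 := (Real.continuous_sqrt.tendsto 0).comp h2
  simpa [Function.comp_def] using h3
end

section
/- Let V be a Hilbert C*-module and {x_n} a τ_{V̂}-convergent sequence admitting a subsequence {x_{n(i)}} whose Cesàro means (1/k) Σ_{i=1}^{k} x_{n(i)} converge in norm to x ∈ V. Then x is the τ_{V̂}-limit of the original sequence {x_n}, i.e. ‖⟨z, x_n − x⟩‖ → 0 for all z ∈ V. -/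
open Filter Topology

/-- The Hilbert C⋆-module class as Mathlib defined it in December 2024 (right `A`-module via
`SMul Aᵐᵒᵖ E`); Mathlib's current `CStarModule` uses a left action with other axioms. -/
class OldCStarModule (A E : Type*) [NonUnitalSemiring A] [StarRing A]
    [Module ℂ A] [AddCommGroup E] [Module ℂ E] [PartialOrder A] [SMul Aᵐᵒᵖ E] [Norm A] [Norm E]
    extends Inner A E where
  inner_add_right {x} {y} {z} : inner x (y + z) = inner x y + inner x z
  inner_self_nonneg {x} : 0 ≤ inner x x
  inner_self {x} : inner x x = 0 ↔ x = 0
  inner_op_smul_right {a : A} {x y : E} : inner x (MulOpposite.op a • y) = inner x y * a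
  inner_smul_right_complex {z : ℂ} {x} {y} : inner x (z • y) = z • inner x y
  star_inner x y : star (inner x y) = inner y x
  norm_eq_sqrt_norm_inner_self x : ‖x‖ = √‖inner x x‖

variable {A : Type*} [NonUnitalCStarAlgebra A] [PartialOrder A] [StarOrderedRing A]
variable {E : Type*} [NormedAddCommGroup E] [NormedSpace ℂ E] [SMul Aᵐᵒᵖ E] [OldCStarModule A E]

local notation "⟪" x ", " y "⟫" => inner (𝕜 := A) x y

namespace OldCStarModule

lemma inner_add_left' {x y z : E} : ⟪x + y, z⟫ = ⟪x, z⟫ + ⟪y, z⟫ := by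
  rw [← OldCStarModule.star_inner (A := A) z (x + y), OldCStarModule.inner_add_right, star_add,
    OldCStarModule.star_inner, OldCStarModule.star_inner]

lemma inner_op_smul_left {a : A} {x y : E} :
    ⟪MulOpposite.op a • x, y⟫ = star a * ⟪x, y⟫ := by
  rw [← OldCStarModule.star_inner (A := A) y, OldCStarModule.inner_op_smul_right, star_mul,
    OldCStarModule.star_inner]

lemma inner_smul_left_complex {c : ℂ} {x y : E} : ⟪c • x, y⟫ = star c • ⟪x, y⟫ := by
  rw [← OldCStarModule.star_inner (A := A) y, OldCStarModule.inner_smul_right_complex, star_smul,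
    OldCStarModule.star_inner]

lemma inner_smul_right_real {r : ℝ} {x y : E} : ⟪x, r • y⟫ = r • ⟪x, y⟫ := by
  have h₁ : r • y = (r : ℂ) • y := (Complex.coe_smul r y).symm
  rw [h₁, OldCStarModule.inner_smul_right_complex, Complex.coe_smul]

lemma inner_smul_left_real {r : ℝ} {x y : E} : ⟪r • x, y⟫ = r • ⟪x, y⟫ := by
  have h₁ : r • x = (r : ℂ) • x := (Complex.coe_smul r x).symm
  rw [h₁, inner_smul_left_complex, Complex.star_def, Complex.conj_ofReal, Complex.coe_smul]

noncomputable def innerₛₗ : E →ₗ⋆[ℂ] E →ₗ[ℂ] A where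
  toFun x := { toFun := fun y => ⟪x, y⟫
               map_add' := fun z y => OldCStarModule.inner_add_right
               map_smul' := fun z y => OldCStarModule.inner_smul_right_complex }
  map_add' z y := by ext; exact inner_add_left'
  map_smul' z y := by ext; simp [inner_smul_left_complex]

lemma inner_sub_right {x y z : E} : ⟪x, y - z⟫ = ⟪x, y⟫ - ⟪x, z⟫ :=
  map_sub (innerₛₗ (A := A) x) y z

lemma inner_sub_left {x y z : E} : ⟪x - y, z⟫ = ⟪x, z⟫ - ⟪y, z⟫ := by
  rw [← OldCStarModule.star_inner (A := A) z, inner_sub_right, star_sub,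
    OldCStarModule.star_inner, OldCStarModule.star_inner]

lemma inner_sum_right {ι : Type*} {s : Finset ι} {x : E} {y : ι → E} :
    ⟪x, ∑ i ∈ s, y i⟫ = ∑ i ∈ s, ⟪x, y i⟫ :=
  map_sum (innerₛₗ (A := A) x) ..

lemma inner_mul_inner_swap_le {x y : E} : ⟪y, x⟫ * ⟪x, y⟫ ≤ ‖x‖ ^ 2 • ⟪y, y⟫ := by
  rcases eq_or_ne x 0 with h | h
  · subst h
    have h0 : ⟪y, (0 : E)⟫ = 0 := map_zero (innerₛₗ (A := A) y)
    simp [h0]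
  · have hx : 0 < ‖x‖ := norm_pos_iff.mpr h
    have h₁ : ∀ a : A, (0 : A) ≤ ‖x‖ ^ 2 • (star a * a) - ‖x‖ ^ 2 • (star a * ⟪x, y⟫)
        - ‖x‖ ^ 2 • (⟪y, x⟫ * a) + ‖x‖ ^ 2 • (‖x‖ ^ 2 • ⟪y, y⟫) := fun a => by
      calc (0 : A) ≤ ⟪MulOpposite.op a • x - (‖x‖ ^ 2 : ℝ) • y,
            MulOpposite.op a • x - (‖x‖ ^ 2 : ℝ) • y⟫ := OldCStarModule.inner_self_nonneg
        _ = star a * ⟪x, x⟫ * a - ‖x‖ ^ 2 • (star a * ⟪x, y⟫)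
            - ‖x‖ ^ 2 • (⟪y, x⟫ * a) + ‖x‖ ^ 2 • (‖x‖ ^ 2 • ⟪y, y⟫) := by
          simp only [inner_sub_right, inner_sub_left, OldCStarModule.inner_op_smul_right,
            inner_op_smul_left, inner_smul_left_real, inner_smul_right_real, mul_sub, sub_mul,
            smul_mul_assoc, mul_smul_comm, smul_sub, mul_assoc]
          abel
        _ ≤ ‖x‖ ^ 2 • (star a * a) - ‖x‖ ^ 2 • (star a * ⟪x, y⟫)
            - ‖x‖ ^ 2 • (⟪y, x⟫ * a) + ‖x‖ ^ 2 • (‖x‖ ^ 2 • ⟪y, y⟫) := by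
          gcongr
          calc star a * ⟪x, x⟫ * a ≤ ‖⟪x, x⟫‖ • (star a * a) :=
                CStarAlgebra.star_left_conjugate_le_norm_smul
                  (OldCStarModule.star_inner (A := A) x x)
            _ = ‖x‖ ^ 2 • (star a * a) := by
                rw [OldCStarModule.norm_eq_sqrt_norm_inner_self (A := A) x,
                  Real.sq_sqrt (norm_nonneg _)]
    specialize h₁ ⟪x, y⟫
    rw [OldCStarModule.star_inner] at h₁
    simp only [sub_self, zero_sub, le_neg_add_iff_add_le, add_zero] at h₁
    rwa [smul_le_smul_iff_of_pos_left (pow_pos hx _)] at h₁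

lemma norm_inner_le {x y : E} : ‖⟪x, y⟫‖ ≤ ‖x‖ * ‖y‖ := by
  have : ‖⟪x, y⟫‖ ^ 2 ≤ (‖x‖ * ‖y‖) ^ 2 := by
    calc ‖⟪x, y⟫‖ ^ 2 = ‖⟪y, x⟫ * ⟪x, y⟫‖ := by
          rw [← OldCStarModule.star_inner (A := A) x y, CStarRing.norm_star_mul_self, pow_two]
      _ ≤ ‖‖x‖ ^ 2 • ⟪y, y⟫‖ := by
          refine CStarAlgebra.norm_le_norm_of_nonneg_of_le ?_ inner_mul_inner_swap_le
          rw [← OldCStarModule.star_inner (A := A) x y]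
          exact star_mul_self_nonneg _
      _ = ‖x‖ ^ 2 * ‖⟪y, y⟫‖ := by rw [norm_smul, norm_pow, norm_norm]
      _ = ‖x‖ ^ 2 * ‖y‖ ^ 2 := by
          rw [OldCStarModule.norm_eq_sqrt_norm_inner_self (A := A) y, Real.sq_sqrt (norm_nonneg _)]
      _ = (‖x‖ * ‖y‖) ^ 2 := by rw [mul_pow]
  exact (pow_le_pow_iff_left₀ (norm_nonneg _) (by positivity) (by norm_num)).mp this

noncomputable def innerSL : E →L⋆[ℂ] E →L[ℂ] A :=
  LinearMap.mkContinuous₂ (innerₛₗ : E →ₗ⋆[ℂ] E →ₗ[ℂ] A) 1 <| fun x y => by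
    show ‖⟪x, y⟫‖ ≤ 1 * ‖x‖ * ‖y‖
    rw [one_mul]
    exact norm_inner_le

lemma continuous_inner : Continuous (fun p : E × E => ⟪p.1, p.2⟫) := by
  have : (fun p : E × E => ⟪p.1, p.2⟫) = fun p => innerSL (A := A) p.1 p.2 := rfl
  rw [this]
  fun_prop

end OldCStarModule

/-- If `{x n}` is a `τ_V̂`-convergent (Cauchy) sequence in a Hilbert C*-module admitting a
subsequence whose Cesàro means converge in norm to `x₀ ∈ E`, then `x₀` is the `τ_V̂`-limit
of the original sequence: `‖⟪z, x n - x₀⟫‖ → 0` for all `z`. -/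
theorem tauHat_lim_of_cesaro_norm_lim [CompleteSpace E] (x : ℕ → E)
    (hx : ∀ z : E, CauchySeq fun n => ⟪z, x n⟫)
    (φ : ℕ → ℕ) (hφ : StrictMono φ) (x₀ : E)
    (hces : Tendsto (fun k => (((k : ℕ) + 1 : ℝ))⁻¹ • ∑ i ∈ Finset.range (k + 1), x (φ i))
      atTop (𝓝 x₀)) :
    ∀ z : E, Tendsto (fun n => ‖⟪z, x n - x₀⟫‖) atTop (𝓝 0) := by
  intro z
  obtain ⟨L, hL⟩ := cauchySeq_tendsto_of_complete (hx z)
  have h1 : Tendsto (fun i => ⟪z, x (φ i)⟫) atTop (𝓝 L) := hL.comp hφ.tendsto_atTop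
  have h2 := h1.cesaro_smul
  have h3 : Tendsto (fun k => (((k : ℕ) + 1 : ℝ))⁻¹ •
      ∑ i ∈ Finset.range (k + 1), ⟪z, x (φ i)⟫) atTop (𝓝 L) := by
    have := h2.comp (tendsto_add_atTop_nat 1)
    simpa [Function.comp_def] using this
  have hcont : Continuous fun y : E => ⟪z, y⟫ :=
    OldCStarModule.continuous_inner.comp (continuous_const.prodMk continuous_id)
  have h4 : Tendsto (fun k => ⟪z, (((k : ℕ) + 1 : ℝ))⁻¹ •
      ∑ i ∈ Finset.range (k + 1), x (φ i)⟫) atTop (𝓝 ⟪z, x₀⟫) := (hcont.tendsto _).comp hces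
  have heq : (fun k => ⟪z, (((k : ℕ) + 1 : ℝ))⁻¹ • ∑ i ∈ Finset.range (k + 1), x (φ i)⟫)
      = fun k => (((k : ℕ) + 1 : ℝ))⁻¹ • ∑ i ∈ Finset.range (k + 1), ⟪z, x (φ i)⟫ := by
    funext k
    rw [OldCStarModule.inner_smul_right_real, OldCStarModule.inner_sum_right]
  rw [heq] at h4
  have hLx : L = ⟪z, x₀⟫ := tendsto_nhds_unique h3 h4
  have : Tendsto (fun n => ⟪z, x n⟫ - ⟪z, x₀⟫) atTop (𝓝 0) := by
    rw [← hLx]; simpa using hL.sub (tendsto_const_nhds : Tendsto (fun _ : ℕ => L) atTop (𝓝 L))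
  have := this.norm
  simp only [norm_zero] at this
  convert this using 2 with n
  rw [OldCStarModule.inner_sub_right]
end

section
/- The C*-algebra A = K(ℓ²) of compact operators on a separable Hilbert space, viewed as a Hilbert A-module over itself, does not have the property (mBS2): the sequence of partial sums q_k = Σ_{i=1}^{k} p_i of a sequence of pairwise orthogonal rank-one projections with supremum the identity is τ_{V̂}-convergent, but no subsequence has norm-convergent Cesàro means in K(ℓ²). -/
open Filter Topology

/-- The C*-algebra `K(ℓ²)` of compact operators on a separable Hilbert space, viewed as a
Hilbert module over itself, fails property (mBS2): for pairwise orthogonal rank-one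
projections `p i` with strong sum the identity, the partial sums `q k = ∑_{i<k} p i` form a
`τ_V̂`-convergent sequence (i.e. `b* ∘ q k` is norm-Cauchy for every compact `b`), but no
subsequence of `{q k}` has Cesàro means converging in norm to a compact operator. -/
theorem compact_operators_not_mBS2 {H : Type*} [NormedAddCommGroup H]
    [InnerProductSpace ℂ H] [CompleteSpace H] [TopologicalSpace.SeparableSpace H]
    (p : ℕ → H →L[ℂ] H)
    (hrank : ∀ i, ∃ u : H, ‖u‖ = 1 ∧ ∀ w : H, p i w = (inner ℂ u w : ℂ) • u)
    (horth : ∀ i j, i ≠ j → (p i).comp (p j) = 0)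
    (hsup : ∀ v : H, Tendsto (fun k => (∑ i ∈ Finset.range k, p i) v) atTop (𝓝 v)) :
    (∀ b : H →L[ℂ] H, IsCompactOperator b →
      CauchySeq fun k => (ContinuousLinearMap.adjoint b).comp (∑ i ∈ Finset.range k, p i)) ∧
    ¬ ∃ φ : ℕ → ℕ, StrictMono φ ∧ ∃ l : H →L[ℂ] H, IsCompactOperator l ∧
      Tendsto (fun j => (((j : ℕ) + 1 : ℝ))⁻¹ •
          ∑ m ∈ Finset.range (j + 1), ∑ i ∈ Finset.range (φ m), p i)
        atTop (𝓝 l) := by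
  classical
  choose u hu hpu using hrank
  set q : ℕ → H →L[ℂ] H := fun k => ∑ i ∈ Finset.range k, p i with hq
  -- each `p i` is self-adjoint
  have hpsa : ∀ i, ContinuousLinearMap.adjoint (p i) = p i := by
    intro i
    symm
    rw [ContinuousLinearMap.eq_adjoint_iff]
    intro x y
    simp only [hpu i, inner_smul_left, inner_smul_right, ← inner_conj_symm x (u i)]
    ring_nf
  have hqsa : ∀ k, ContinuousLinearMap.adjoint (q k) = q k := by
    intro k
    simp only [hq, map_sum]
    exact Finset.sum_congr rfl fun i _ => hpsa i
  -- uniform bound on `‖q k‖` by Banach–Steinhaus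
  obtain ⟨C, hC⟩ : ∃ C, ∀ k, ‖q k‖ ≤ C := by
    apply banach_steinhaus
    intro v
    obtain ⟨C, hC⟩ := ((hsup v).norm).bddAbove_range
    exact ⟨C, fun k => hC ⟨k, rfl⟩⟩
  have hC0 : 0 ≤ C := le_trans (norm_nonneg _) (hC 0)
  have hD : ∀ k, ‖q k - 1‖ ≤ C + 1 := fun k => by
    refine le_trans (norm_sub_le _ _) (add_le_add (hC k) ?_)
    exact ContinuousLinearMap.norm_id_le
  have hD1 : (0:ℝ) < C + 1 := by linarith
  constructor
  · -- first part: τ_V̂-Cauchy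
    intro b hb
    have key : Tendsto (fun k => (ContinuousLinearMap.adjoint b).comp (q k)) atTop
        (𝓝 (ContinuousLinearMap.adjoint b)) := by
      rw [Metric.tendsto_atTop]
      intro ε hε
      -- total boundedness of the image of the unit ball
      have hS : IsCompact (closure (⇑b '' Metric.closedBall 0 1)) :=
        hb.isCompact_closure_image_closedBall (𝕜₁ := ℂ) 1
      set ε₀ : ℝ := ε / (3 * (C + 1)) with hε₀def
      have hε₀ : 0 < ε₀ := by positivity
      obtain ⟨t, htfin, htsub⟩ :=
        (Metric.totallyBounded_iff.1 hS.totallyBounded) ε₀ hε₀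
      -- pick `N` good for all the (finitely many) centers
      have hev : ∀ᶠ k in atTop, ∀ y ∈ t, ‖q k y - y‖ < ε / 3 := by
        rw [eventually_all_finite htfin]
        intro y _
        have h1 : Tendsto (fun k => ‖q k y - y‖) atTop (𝓝 0) := by
          rw [hq]
          simpa using ((hsup y).sub_const y).norm
        have := h1.eventually (eventually_lt_nhds (by positivity : (0:ℝ) < ε / 3))
        simpa using this
      obtain ⟨N, hN⟩ := eventually_atTop.1 hev
      refine ⟨N, fun k hk => ?_⟩
      -- the crucial norm estimate
      have hnorm : ‖(q k - 1).comp b‖ ≤ 2 * ε / 3 := by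
        refine ContinuousLinearMap.opNorm_le_bound _ (by positivity) fun v => ?_
        rcases eq_or_ne v 0 with rfl | hv
        · simp
        · have hvpos : 0 < ‖v‖ := norm_pos_iff.2 hv
          set c : ℂ := (‖v‖ : ℂ) with hcdef
          have hc : ‖c‖ = ‖v‖ := by simp [hcdef, abs_of_nonneg hvpos.le]
          have hc0 : c ≠ 0 := by
            simp only [hcdef, ne_eq, Complex.ofReal_eq_zero]; exact hvpos.ne'
          set w : H := c⁻¹ • v with hw
          have hwball : w ∈ Metric.closedBall (0:H) 1 := by
            simp only [hw, Metric.mem_closedBall, dist_zero_right, norm_smul, norm_inv, hc]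
            rw [inv_mul_cancel₀ hvpos.ne']
          have hbw : b w ∈ closure (⇑b '' Metric.closedBall 0 1) :=
            subset_closure ⟨w, hwball, rfl⟩
          obtain ⟨y, hyt, hy⟩ := Set.mem_iUnion₂.1 (htsub hbw)
          have hy' : ‖b w - y‖ < ε₀ := by
            rw [← dist_eq_norm]; exact Metric.mem_ball.1 hy
          have est : ‖(q k - 1) (b w)‖ ≤ 2 * ε / 3 := by
            have e1 : ‖(q k - 1) (b w - y)‖ ≤ (C + 1) * ε₀ := by
              calc ‖(q k - 1) (b w - y)‖ ≤ ‖q k - 1‖ * ‖b w - y‖ :=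
                    (q k - 1).le_opNorm _
                _ ≤ (C + 1) * ε₀ :=
                    mul_le_mul (hD k) hy'.le (norm_nonneg _) hD1.le
            have e2 : ‖(q k - 1) y‖ < ε / 3 := by
              have h5 := hN k hk y hyt
              simpa only [ContinuousLinearMap.sub_apply, ContinuousLinearMap.one_apply]
                using h5
            have e3 : (C + 1) * ε₀ = ε / 3 := by
              rw [hε₀def]; field_simp
            calc ‖(q k - 1) (b w)‖ = ‖(q k - 1) (b w - y) + (q k - 1) y‖ := by
                  rw [← map_add, sub_add_cancel]
              _ ≤ ‖(q k - 1) (b w - y)‖ + ‖(q k - 1) y‖ := norm_add_le _ _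
              _ ≤ ε / 3 + ε / 3 := add_le_add (e3 ▸ e1) e2.le
              _ = 2 * ε / 3 := by ring
          have hbv : b v = c • b w := by
            rw [hw, map_smul, smul_smul, mul_inv_cancel₀ hc0, one_smul]
          calc ‖((q k - 1).comp b) v‖ = ‖(q k - 1) (b v)‖ := rfl
            _ = ‖v‖ * ‖(q k - 1) (b w)‖ := by
                rw [hbv, map_smul, norm_smul, hc]
            _ ≤ ‖v‖ * (2 * ε / 3) := by
                exact mul_le_mul_of_nonneg_left est hvpos.le
            _ = 2 * ε / 3 * ‖v‖ := by ring
      have heq : (ContinuousLinearMap.adjoint b).comp (q k) - ContinuousLinearMap.adjoint b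
          = ContinuousLinearMap.adjoint ((q k - 1).comp b) := by
        rw [ContinuousLinearMap.adjoint_comp, map_sub, hqsa]
        simp [ContinuousLinearMap.comp_sub, ContinuousLinearMap.one_def,
          ContinuousLinearMap.adjoint_id]
      rw [dist_eq_norm, heq]
      calc ‖ContinuousLinearMap.adjoint ((q k - 1).comp b)‖ = ‖(q k - 1).comp b‖ :=
            LinearIsometryEquiv.norm_map _ _
        _ ≤ 2 * ε / 3 := hnorm
        _ < ε := by linarith
    exact key.cauchySeq
  · -- second part
    rintro ⟨φ, hφ, l, hl, htend⟩
    -- orthonormality of the `u i`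
    have huo : Orthonormal ℂ u := by
      refine ⟨hu, fun {i j} hij => ?_⟩
      have h0 : p i (p j (u j)) = 0 := by
        calc p i (p j (u j)) = ((p i).comp (p j)) (u j) := rfl
          _ = 0 := by rw [horth i j hij]; rfl
      rw [hpu j, hpu i] at h0
      simp only [inner_smul_right] at h0
      have huj : (inner ℂ (u j) (u j) : ℂ) = 1 := by
        rw [inner_self_eq_norm_sq_to_K, hu j]; norm_num
      rw [huj, one_mul, smul_eq_zero] at h0
      rcases h0 with h | h
      · exact h
      · exact absurd (hu i) (by simp [h])
    -- `l` is the identity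
    have hlv : ∀ v : H, l v = v := by
      intro v
      have h1 : Tendsto (fun j => ((((j:ℕ):ℝ) + 1)⁻¹ •
          ∑ m ∈ Finset.range (j + 1), q (φ m)) v) atTop (𝓝 (l v)) :=
        ((ContinuousLinearMap.apply ℂ H v).continuous.tendsto l).comp htend
      have h2 : Tendsto (fun j : ℕ => (((j:ℝ) + 1)⁻¹ •
          ∑ m ∈ Finset.range (j + 1), q (φ m) v)) atTop (𝓝 v) := by
        have hqv : Tendsto (fun m => q (φ m) v) atTop (𝓝 v) :=
          (hsup v).comp hφ.tendsto_atTop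
        have h3 := hqv.cesaro_smul.comp (tendsto_add_atTop_nat 1)
        have : (fun j : ℕ => (((j:ℝ) + 1)⁻¹ • ∑ m ∈ Finset.range (j + 1), q (φ m) v))
            = (fun n : ℕ => ((n:ℝ))⁻¹ • ∑ m ∈ Finset.range n, q (φ m) v) ∘ (fun j => j + 1) := by
          funext j
          simp [Function.comp]
        rw [this]
        exact h3
      have h1' : Tendsto (fun j : ℕ => (((j:ℝ) + 1)⁻¹ •
          ∑ m ∈ Finset.range (j + 1), q (φ m) v)) atTop (𝓝 (l v)) := by
        convert h1 using 2 with j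
        simp [ContinuousLinearMap.smul_apply, ContinuousLinearMap.sum_apply]
      exact tendsto_nhds_unique h1' h2
    -- so the identity is a compact operator, hence `H` is finite-dimensional
    obtain ⟨K, hK, hKmem⟩ := hl
    have hpre : ⇑l ⁻¹' K = K := by
      ext x; simp [hlv x]
    rw [hpre] at hKmem
    obtain ⟨r, hr, hrsub⟩ := (Metric.nhds_basis_closedBall.mem_iff).1 hKmem
    have hcb : IsCompact (Metric.closedBall (0:H) r) :=
      hK.of_isClosed_subset Metric.isClosed_closedBall hrsub
    have hfd : FiniteDimensional ℂ H :=
      FiniteDimensional.of_isCompact_closedBall₀ ℂ hr hcb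
    have hlin := huo.linearIndependent
    have := hlin.lt_aleph0_of_finiteDimensional
    simp [Cardinal.mk_nat] at this
end

section
/- Let V be a countably generated self-dual Hilbert module over a unital C*-algebra A. Then V has property (mBS2): every τ_{V̂}-convergent sequence in V admits a subsequence with norm-convergent Cesàro means. -/
open Filter Topology

/-- A bounded `A`-linear map from a Hilbert C*-module `E` to the C*-algebra `A`,
an element of the dual module `V' = Hom_A(V, A)`. -/
structure ModuleDual (A E : Type*) [NonUnitalCStarAlgebra A] [NormedAddCommGroup E]
    [NormedSpace ℂ E] [SMul Aᵐᵒᵖ E] where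
  toFun : E → A
  map_add' : ∀ x y : E, toFun (x + y) = toFun x + toFun y
  map_op_smul' : ∀ (a : A) (x : E), toFun (MulOpposite.op a • x) = toFun x * a
  bound' : ∃ C : ℝ, ∀ x : E, ‖toFun x‖ ≤ C * ‖x‖

/-- The December 2024 Mathlib notion of a Hilbert C*-module: a right `A`-module
(via `Aᵐᵒᵖ`) with an `A`-valued inner product linear in the second argument. -/
class CStarModule' (A : outParam <| Type*) (E : Type*) [NonUnitalSemiring A] [StarRing A]
    [Module ℂ A] [AddCommGroup E] [Module ℂ E] [PartialOrder A] [SMul Aᵐᵒᵖ E] [Norm A] [Norm E]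
    extends Inner A E where
  inner_add_right {x} {y} {z} : inner x (y + z) = inner x y + inner x z
  inner_self_nonneg {x} : 0 ≤ inner x x
  inner_self {x} : inner x x = 0 ↔ x = 0
  inner_op_smul_right {a : A} {x y : E} : inner x (MulOpposite.op a • y) = inner x y * a
  inner_smul_right_complex {z : ℂ} {x} {y} : inner x (z • y) = z • inner x y
  star_inner x y : star (inner x y) = inner y x
  norm_eq_sqrt_norm_inner_self x : ‖x‖ = √‖inner x x‖

variable {A : Type*} [CStarAlgebra A] [PartialOrder A] [StarOrderedRing A]
variable {E : Type*} [NormedAddCommGroup E] [NormedSpace ℂ E] [SMul Aᵐᵒᵖ E] [CStarModule' A E]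

local notation "⟪" x ", " y "⟫" => inner (𝕜 := A) x y

private def myInnerₗ (x : E) : E →ₗ[ℂ] A where
  toFun y := ⟪x, y⟫
  map_add' _ _ := CStarModule'.inner_add_right
  map_smul' c y := by
    simp only [RingHom.id_apply]
    exact CStarModule'.inner_smul_right_complex

private lemma my_inner_sub_right (x y z : E) : ⟪x, y - z⟫ = ⟪x, y⟫ - ⟪x, z⟫ :=
  map_sub (myInnerₗ x) y z

private lemma my_inner_zero_right (x : E) : ⟪x, (0 : E)⟫ = 0 :=
  map_zero (myInnerₗ x)

private lemma my_inner_zero_left (x : E) : ⟪(0 : E), x⟫ = 0 := by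
  rw [← CStarModule'.star_inner, my_inner_zero_right, star_zero]

private lemma my_inner_sub_left (x y z : E) : ⟪x - y, z⟫ = ⟪x, z⟫ - ⟪y, z⟫ := by
  rw [← CStarModule'.star_inner, my_inner_sub_right, star_sub, CStarModule'.star_inner,
    CStarModule'.star_inner]

private lemma my_inner_smul_right_real (r : ℝ) (x y : E) : ⟪x, r • y⟫ = r • ⟪x, y⟫ := by
  rw [RCLike.real_smul_eq_coe_smul (K := ℂ) r y, CStarModule'.inner_smul_right_complex,
    ← RCLike.real_smul_eq_coe_smul (K := ℂ) r]

private lemma my_inner_smul_left_real (r : ℝ) (x y : E) : ⟪r • x, y⟫ = r • ⟪x, y⟫ := by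
  rw [← CStarModule'.star_inner, my_inner_smul_right_real, star_smul, star_trivial,
    CStarModule'.star_inner]

private lemma my_inner_op_smul_left (a : A) (x y : E) :
    ⟪MulOpposite.op a • x, y⟫ = star a * ⟪x, y⟫ := by
  rw [← CStarModule'.star_inner, CStarModule'.inner_op_smul_right, star_mul,
    CStarModule'.star_inner]

private lemma my_norm_sq_eq (x : E) : ‖x‖ ^ 2 = ‖⟪x, x⟫‖ := by
  rw [CStarModule'.norm_eq_sqrt_norm_inner_self (A := A) x, Real.sq_sqrt (norm_nonneg _)]

private lemma my_inner_swap_le (x y : E) : ⟪y, x⟫ * ⟪x, y⟫ ≤ ‖x‖ ^ 2 • ⟪y, y⟫ := by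
  rcases eq_or_ne x 0 with h | h
  · simp [h, my_inner_zero_right, my_inner_zero_left]
  · have h₁ : ∀ a : A, (0 : A) ≤ ‖x‖ ^ 2 • (star a * a) - ‖x‖ ^ 2 • (star a * ⟪x, y⟫)
        - ‖x‖ ^ 2 • (⟪y, x⟫ * a) + ‖x‖ ^ 2 • (‖x‖ ^ 2 • ⟪y, y⟫) := fun a => by
      calc (0 : A) ≤ ⟪MulOpposite.op a • x - ‖x‖ ^ 2 • y, MulOpposite.op a • x - ‖x‖ ^ 2 • y⟫ :=
            CStarModule'.inner_self_nonneg
        _ = star a * ⟪x, x⟫ * a - ‖x‖ ^ 2 • (star a * ⟪x, y⟫)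
            - ‖x‖ ^ 2 • (⟪y, x⟫ * a) + ‖x‖ ^ 2 • (‖x‖ ^ 2 • ⟪y, y⟫) := by
          simp only [my_inner_sub_left, my_inner_sub_right, my_inner_op_smul_left,
            CStarModule'.inner_op_smul_right, my_inner_smul_left_real, my_inner_smul_right_real,
            mul_sub, sub_mul, smul_sub, smul_mul_assoc, mul_smul_comm, mul_assoc]
          abel
        _ ≤ ‖x‖ ^ 2 • (star a * a) - ‖x‖ ^ 2 • (star a * ⟪x, y⟫)
            - ‖x‖ ^ 2 • (⟪y, x⟫ * a) + ‖x‖ ^ 2 • (‖x‖ ^ 2 • ⟪y, y⟫) := by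
          gcongr
          rw [my_norm_sq_eq]
          exact CStarAlgebra.star_left_conjugate_le_norm_smul (CStarModule'.star_inner x x)
    specialize h₁ ⟪x, y⟫
    simp only [CStarModule'.star_inner, sub_self, zero_sub, le_neg_add_iff_add_le, add_zero] at h₁
    have hx : (0 : ℝ) < ‖x‖ ^ 2 := pow_pos (norm_pos_iff.mpr h) _
    rwa [smul_le_smul_iff_of_pos_left hx] at h₁

private lemma my_norm_inner_le (x y : E) : ‖⟪x, y⟫‖ ≤ ‖x‖ * ‖y‖ := by
  have := calc ‖⟪x, y⟫‖ ^ 2 = ‖⟪y, x⟫ * ⟪x, y⟫‖ := by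
                rw [← CStarModule'.star_inner x y, CStarRing.norm_star_mul_self, pow_two]
    _ ≤ ‖‖x‖ ^ 2 • ⟪y, y⟫‖ := by
                refine CStarAlgebra.norm_le_norm_of_nonneg_of_le ?_ (my_inner_swap_le x y)
                rw [← CStarModule'.star_inner x y]
                exact star_mul_self_nonneg _
    _ = ‖x‖ ^ 2 * ‖y‖ ^ 2 := by
                rw [norm_smul, Real.norm_eq_abs, abs_of_nonneg (by positivity), my_norm_sq_eq y]
    _ = (‖x‖ * ‖y‖) ^ 2 := by rw [mul_pow]
  exact (pow_le_pow_iff_left₀ (norm_nonneg _) (by positivity) (by norm_num)).mp this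

private noncomputable def myInnerSL (x : E) : E →L[ℂ] A :=
  (myInnerₗ x).mkContinuous ‖x‖ fun y => my_norm_inner_le x y

private lemma my_inner_sum_right (x : E) (s : Finset ℕ) (f : ℕ → E) :
    ⟪x, ∑ i ∈ s, f i⟫ = ∑ i ∈ s, ⟪x, f i⟫ := by
  classical
  induction s using Finset.induction with
  | empty => simp [my_inner_zero_right]
  | @insert a s h ih =>
      rw [Finset.sum_insert h, Finset.sum_insert h, CStarModule'.inner_add_right, ih]

private lemma my_inner_sum_left (x : E) (s : Finset ℕ) (f : ℕ → E) :
    ⟪∑ i ∈ s, f i, x⟫ = ∑ i ∈ s, ⟪f i, x⟫ := by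
  rw [← CStarModule'.star_inner, my_inner_sum_right, star_sum]
  exact Finset.sum_congr rfl fun i _ => CStarModule'.star_inner _ _

/-- A countably generated self-dual Hilbert module `E` over a unital C*-algebra `A` has
property (mBS2): every `τ_V̂`-convergent sequence admits a subsequence whose Cesàro means
converge in norm. -/
theorem mBS2_of_selfDual [CompleteSpace E] (g : ℕ → E)
    (hg : Dense (Submodule.span ℂ
      {y : E | ∃ (i : ℕ) (a : A), y = MulOpposite.op a • g i} : Set E))
    (hsd : ∀ f : ModuleDual A E, ∃ x : E, ∀ y : E, f.toFun y = ⟪x, y⟫) :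
    ∀ x : ℕ → E, (∀ z : E, CauchySeq fun n => ⟪z, x n⟫) →
      ∃ φ : ℕ → ℕ, StrictMono φ ∧ ∃ l : E,
        Tendsto (fun k => (((k : ℕ) + 1 : ℝ))⁻¹ • ∑ i ∈ Finset.range (k + 1), x (φ i))
          atTop (𝓝 l) := by
  intro x hx
  classical
  -- limits of the inner products
  have hconv0 : ∀ z : E, ∃ a : A, Tendsto (fun n => ⟪z, x n⟫) atTop (𝓝 a) :=
    fun z => cauchySeq_tendsto_of_complete (hx z)
  have hconv : ∀ z : E, ∃ a : A, Tendsto (fun n => ⟪x n, z⟫) atTop (𝓝 a) := by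
    intro z
    obtain ⟨a, ha⟩ := hconv0 z
    exact ⟨star a, by simpa only [CStarModule'.star_inner] using ha.star⟩
  choose L hL using hconv
  -- uniform boundedness
  obtain ⟨C, hC⟩ : ∃ C, ∀ n, ‖myInnerSL (x n)‖ ≤ C := by
    apply banach_steinhaus
    intro z
    obtain ⟨R, hR⟩ := (hL z).norm.bddAbove_range
    exact ⟨R, fun n => hR (Set.mem_range_self n)⟩
  set M : ℝ := max C 0 with hMdef
  have hM : ∀ n, ‖x n‖ ≤ M := by
    intro n
    have h1 : ‖x n‖ ^ 2 ≤ C * ‖x n‖ := by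
      rw [my_norm_sq_eq]
      calc ‖⟪x n, x n⟫‖ = ‖myInnerSL (x n) (x n)‖ := rfl
        _ ≤ ‖myInnerSL (x n)‖ * ‖x n‖ :=
            ContinuousLinearMap.le_opNorm _ _
        _ ≤ C * ‖x n‖ := mul_le_mul_of_nonneg_right (hC n) (norm_nonneg _)
    nlinarith [norm_nonneg (x n), le_max_left C 0, le_max_right C 0]
  have hM0 : 0 ≤ M := le_max_right C 0
  -- the limit functional is a module dual element
  obtain ⟨w, hw⟩ := hsd
    { toFun := L
      map_add' := fun y z => by
        refine tendsto_nhds_unique (hL (y + z)) ?_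
        simpa only [CStarModule'.inner_add_right] using (hL y).add (hL z)
      map_op_smul' := fun a z => by
        refine tendsto_nhds_unique (hL (MulOpposite.op a • z)) ?_
        simpa only [CStarModule'.inner_op_smul_right] using (hL z).mul_const a
      bound' := ⟨M, fun z => by
        refine le_of_tendsto (hL z).norm (Eventually.of_forall fun n => ?_)
        exact (my_norm_inner_le _ _).trans
          (mul_le_mul_of_nonneg_right (hM n) (norm_nonneg z))⟩ }
  have hw' : ∀ z : E, L z = ⟪w, z⟫ := hw
  -- the recentered sequence is τ-null
  set y : ℕ → E := fun n => x n - w with hy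
  have hMy : ∀ n, ‖y n‖ ≤ M + ‖w‖ := fun n =>
    (norm_sub_le _ _).trans (add_le_add (hM n) le_rfl)
  have hnull : ∀ z : E, Tendsto (fun n => ‖⟪z, y n⟫‖) atTop (𝓝 0) := by
    intro z
    have h1 : Tendsto (fun n => ⟪x n, z⟫ - ⟪w, z⟫) atTop (𝓝 0) := by
      simpa [hw' z] using (hL z).sub_const ⟪w, z⟫
    have h2 : ∀ n, ‖⟪z, y n⟫‖ = ‖⟪x n, z⟫ - ⟪w, z⟫‖ := by
      intro n
      have : ⟪z, y n⟫ = star (⟪x n, z⟫ - ⟪w, z⟫) := by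
        simp [hy, my_inner_sub_right, CStarModule'.star_inner]
      rw [this, norm_star]
    simpa only [h2, norm_zero] using h1.norm
  -- Banach–Saks type selection
  obtain ⟨φ, -, hφ⟩ := exists_seq_of_forall_finset_exists (fun _ : ℕ => True)
    (fun m n => m < n ∧ ‖⟪y m, y n⟫‖ ≤ (2 : ℝ)⁻¹ ^ m) (by
    intro s _
    have hev : ∀ᶠ n in atTop, ∀ m ∈ s, m < n ∧ ‖⟪y m, y n⟫‖ ≤ (2 : ℝ)⁻¹ ^ m := by
      rw [eventually_all_finset]
      intro m _
      filter_upwards [eventually_gt_atTop m,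
        Filter.Tendsto.eventually_lt_const (by positivity : (0:ℝ) < (2 : ℝ)⁻¹ ^ m)
          (hnull (y m))] with n h1 h2
      exact ⟨h1, h2.le⟩
    obtain ⟨n, hn⟩ := hev.exists
    exact ⟨n, trivial, hn⟩)
  have hmono : StrictMono φ := fun m n h => (hφ m n h).1
  refine ⟨φ, hmono, w, ?_⟩
  set c : ℝ := (M + ‖w‖) ^ 2 with hc
  -- key norm estimate on the Cesàro means of `y ∘ φ`
  have key : ∀ k : ℕ, ‖(((k : ℕ) + 1 : ℝ))⁻¹ • ∑ i ∈ Finset.range (k + 1), y (φ i)‖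
      ≤ Real.sqrt ((c + 4) / ((k : ℝ) + 1)) := by
    intro k
    set N : ℕ := k + 1 with hN
    set S : E := ∑ i ∈ Finset.range N, y (φ i) with hS
    have hNpos : (0:ℝ) < (N : ℝ) := by positivity
    have hSS : ‖⟪S, S⟫‖ ≤ (N : ℝ) * (c + 4) := by
      have e1 : ⟪S, S⟫ = ∑ i ∈ Finset.range N, ∑ j ∈ Finset.range N, ⟪y (φ i), y (φ j)⟫ := by
        rw [hS, my_inner_sum_left]
        exact Finset.sum_congr rfl fun i _ => my_inner_sum_right _ _ _
      have e2 : ‖⟪S, S⟫‖ ≤ ∑ i ∈ Finset.range N, ∑ j ∈ Finset.range N, ‖⟪y (φ i), y (φ j)⟫‖ := by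
        rw [e1]
        exact (norm_sum_le _ _).trans (Finset.sum_le_sum fun i _ => norm_sum_le _ _)
      have hbd : ∀ i j : ℕ, ‖⟪y (φ i), y (φ j)⟫‖
          ≤ (if i = j then c else 0) + ((2 : ℝ)⁻¹ ^ i + (2 : ℝ)⁻¹ ^ j) := by
        intro i j
        have hpi : (0:ℝ) ≤ (2 : ℝ)⁻¹ ^ i := by positivity
        have hpj : (0:ℝ) ≤ (2 : ℝ)⁻¹ ^ j := by positivity
        rcases lt_trichotomy i j with h | h | h
        · have h2 := (hφ i j h).2
          have h3 : ((2 : ℝ)⁻¹) ^ (φ i) ≤ (2 : ℝ)⁻¹ ^ i :=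
            pow_le_pow_of_le_one (by norm_num) (by norm_num) hmono.le_apply
          rw [if_neg h.ne]
          linarith [h2.trans h3]
        · subst h
          rw [if_pos rfl]
          have h4 : ‖⟪y (φ i), y (φ i)⟫‖ ≤ (M + ‖w‖) * (M + ‖w‖) :=
            (my_norm_inner_le _ _).trans
              (mul_le_mul (hMy _) (hMy _) (norm_nonneg _) (by positivity))
          have : (M + ‖w‖) * (M + ‖w‖) = c := by rw [hc]; ring
          linarith
        · have h2 := (hφ j i h).2
          have h3 : ((2 : ℝ)⁻¹) ^ (φ j) ≤ (2 : ℝ)⁻¹ ^ j :=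
            pow_le_pow_of_le_one (by norm_num) (by norm_num) hmono.le_apply
          have h4 : ‖⟪y (φ i), y (φ j)⟫‖ = ‖⟪y (φ j), y (φ i)⟫‖ := by
            rw [← CStarModule'.star_inner, norm_star]
          rw [if_neg h.ne', h4]
          linarith [h2.trans h3]
      have hT : ∑ j ∈ Finset.range N, (2 : ℝ)⁻¹ ^ j ≤ 2 := by
        simpa [one_div] using sum_geometric_two_le N
      set T : ℝ := ∑ j ∈ Finset.range N, (2 : ℝ)⁻¹ ^ j with hTdef
      have hsum : ∑ i ∈ Finset.range N, ∑ j ∈ Finset.range N,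
          ((if i = j then c else 0) + ((2 : ℝ)⁻¹ ^ i + (2 : ℝ)⁻¹ ^ j))
          ≤ (N : ℝ) * (c + 4) := by
        have step : ∀ i ∈ Finset.range N, ∑ j ∈ Finset.range N,
            ((if i = j then c else 0) + ((2 : ℝ)⁻¹ ^ i + (2 : ℝ)⁻¹ ^ j))
            = c + ((N : ℝ) * (2 : ℝ)⁻¹ ^ i + T) := by
          intro i hi
          rw [Finset.sum_add_distrib, Finset.sum_add_distrib, Finset.sum_const,
            Finset.card_range, nsmul_eq_mul, Finset.sum_ite_eq (Finset.range N) i fun _ => c,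
            if_pos hi, hTdef]
        rw [Finset.sum_congr rfl step, Finset.sum_add_distrib, Finset.sum_add_distrib,
          Finset.sum_const, Finset.sum_const, Finset.card_range, nsmul_eq_mul, nsmul_eq_mul,
          ← Finset.mul_sum, ← hTdef]
        have hc0 : (0:ℝ) ≤ c := by positivity
        nlinarith [hT, hNpos]
      exact e2.trans ((Finset.sum_le_sum fun i _ =>
        Finset.sum_le_sum fun j _ => hbd i j).trans hsum)
    -- pass to the Cesàro mean
    have hcast : ((k : ℝ) + 1) = (N : ℝ) := by rw [hN]; push_cast; ring
    have hnorm : ‖(((k : ℕ) + 1 : ℝ))⁻¹ • S‖ = ((N : ℝ))⁻¹ * ‖S‖ := by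
      rw [norm_smul, Real.norm_eq_abs, hcast, abs_of_pos (by positivity)]
    refine Real.le_sqrt_of_sq_le ?_
    rw [hnorm, mul_pow, my_norm_sq_eq, hcast]
    calc ((N : ℝ)⁻¹) ^ 2 * ‖⟪S, S⟫‖ ≤ ((N : ℝ)⁻¹) ^ 2 * ((N : ℝ) * (c + 4)) := by
          exact mul_le_mul_of_nonneg_left hSS (by positivity)
      _ = (c + 4) / (N : ℝ) := by field_simp
  -- the Cesàro means of `y ∘ φ` tend to zero in norm
  have hmean : Tendsto (fun k : ℕ => (((k : ℕ) + 1 : ℝ))⁻¹ • ∑ i ∈ Finset.range (k + 1), y (φ i))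
      atTop (𝓝 0) := by
    rw [tendsto_zero_iff_norm_tendsto_zero]
    refine squeeze_zero (fun k => norm_nonneg _) key ?_
    have h0 : Tendsto (fun k : ℕ => (c + 4) / ((k : ℝ) + 1)) atTop (𝓝 0) := by
      have := (tendsto_const_div_atTop_nhds_zero_nat (c + 4)).comp (tendsto_add_atTop_nat 1)
      refine this.congr fun k => ?_
      simp only [Function.comp_apply]
      push_cast
      ring_nf
    have hsqrt := (Real.continuous_sqrt.tendsto 0).comp h0
    rw [Real.sqrt_zero] at hsqrt
    exact hsqrt
  -- conclude
  have hfin : ∀ k : ℕ, (((k : ℕ) + 1 : ℝ))⁻¹ • ∑ i ∈ Finset.range (k + 1), x (φ i)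
      = w + (((k : ℕ) + 1 : ℝ))⁻¹ • ∑ i ∈ Finset.range (k + 1), y (φ i) := by
    intro k
    have hsplit : ∑ i ∈ Finset.range (k + 1), x (φ i)
        = (∑ i ∈ Finset.range (k + 1), y (φ i)) + (k + 1) • w := by
      have : ∀ i, x (φ i) = y (φ i) + w := fun i => by simp [hy]
      rw [Finset.sum_congr rfl fun i _ => this i, Finset.sum_add_distrib, Finset.sum_const,
        Finset.card_range]
    rw [hsplit, smul_add, add_comm]
    congr 1
    have h1 : ((k : ℝ) + 1) • w = (k + 1) • w := by
      rw [← Nat.cast_smul_eq_nsmul ℝ (k + 1) w]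
      push_cast
      ring_nf
    rw [← h1, inv_smul_smul₀ (by positivity)]
  have := (tendsto_const_nhds (x := w) (f := atTop (α := ℕ))).add hmean
  rw [add_zero] at this
  exact this.congr fun k => (hfin k).symm
end
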